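/- arXiv:2603.14080 — 8 statements merged into one kernel-verified Lean document; each statement's English description precedes it below -/
import Mathlib

section
/- Let A be an abelian group, H1 and H2 subgroups of A with H := H1 ∩ H2 of finite index in A, and let π : A → A/H be the quotient map. Then for all a1, a2 ∈ A, the image π((a1 + H1) ∪ (a2 + H2)) has cardinality at least that of π(H1 ∪ H2). -/
/-- For an abelian group `A` with subgroups `H1, H2` such that
`H := H1 ⊓ H2` has finite index, and `π : A → A ⧸ H` the quotient map, for all
`a1, a2 ∈ A` the image `π ((a1 + H1) ∪ (a2 + H2))` has cardinality at least that of
`π (H1 ∪ H2)`. -/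
theorem rogers_two_subgroups {A : Type*} [AddCommGroup A] (H1 H2 : AddSubgroup A)
    [Finite (A ⧸ (H1 ⊓ H2))] (a1 a2 : A) :
    ((QuotientAddGroup.mk : A → A ⧸ (H1 ⊓ H2)) ''
        (((a1 + ·) '' (H1 : Set A)) ∪ ((a2 + ·) '' (H2 : Set A)))).ncard ≥
      ((QuotientAddGroup.mk : A → A ⧸ (H1 ⊓ H2)) '' ((H1 : Set A) ∪ (H2 : Set A))).ncard := by
  set π : A → A ⧸ (H1 ⊓ H2) := QuotientAddGroup.mk with hπ
  -- key claim: if π u = π v with u ∈ H1, v ∈ H2, then π u = 0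
  have key : ∀ u v : A, u ∈ H1 → v ∈ H2 → π u = π v → π u = (0 : A ⧸ (H1 ⊓ H2)) := by
    intro u v hu hv huv
    have h1 : -u + v ∈ H1 ⊓ H2 := (QuotientAddGroup.eq).mp huv
    have hvH1 : v ∈ H1 := by
      have := add_mem hu h1.1
      simpa using this
    have : v ∈ H1 ⊓ H2 := ⟨hvH1, hv⟩
    have hv0 : π v = 0 := (QuotientAddGroup.eq_zero_iff v).mpr this
    rw [huv, hv0]
  set K1 : Set (A ⧸ (H1 ⊓ H2)) := π '' (H1 : Set A) with hK1
  set K2 : Set (A ⧸ (H1 ⊓ H2)) := π '' (H2 : Set A) with hK2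
  set S1 : Set (A ⧸ (H1 ⊓ H2)) := π '' ((a1 + ·) '' (H1 : Set A)) with hS1
  set S2 : Set (A ⧸ (H1 ⊓ H2)) := π '' ((a2 + ·) '' (H2 : Set A)) with hS2
  have hSmem : ∀ (a : A) (H : AddSubgroup A) (x : A ⧸ (H1 ⊓ H2)),
      x ∈ π '' ((a + ·) '' (H : Set A)) ↔ ∃ h ∈ H, x = π a + π h := by
    intro a H x
    constructor
    · rintro ⟨y, ⟨h, hh, rfl⟩, rfl⟩
      exact ⟨h, hh, rfl⟩
    · rintro ⟨h, hh, rfl⟩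
      exact ⟨a + h, ⟨h, hh, rfl⟩, rfl⟩
  -- cardinalities of translates
  have hS1card : S1.ncard = K1.ncard := by
    have : S1 = (π a1 + ·) '' K1 := by
      ext x
      rw [hS1, hSmem]
      constructor
      · rintro ⟨h, hh, rfl⟩; exact ⟨π h, ⟨h, hh, rfl⟩, rfl⟩
      · rintro ⟨y, ⟨h, hh, rfl⟩, rfl⟩; exact ⟨h, hh, rfl⟩
    rw [this, Set.ncard_image_of_injective _ (add_right_injective _)]
  have hS2card : S2.ncard = K2.ncard := by
    have : S2 = (π a2 + ·) '' K2 := by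
      ext x
      rw [hS2, hSmem]
      constructor
      · rintro ⟨h, hh, rfl⟩; exact ⟨π h, ⟨h, hh, rfl⟩, rfl⟩
      · rintro ⟨y, ⟨h, hh, rfl⟩, rfl⟩; exact ⟨h, hh, rfl⟩
    rw [this, Set.ncard_image_of_injective _ (add_right_injective _)]
  -- K1 ∩ K2 = {0}
  have hKinter : K1 ∩ K2 = {(0 : A ⧸ (H1 ⊓ H2))} := by
    apply Set.eq_singleton_iff_unique_mem.mpr
    constructor
    · exact ⟨⟨0, H1.zero_mem, rfl⟩, ⟨0, H2.zero_mem, rfl⟩⟩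
    · rintro x ⟨⟨u, hu, rfl⟩, ⟨v, hv, hvx⟩⟩
      exact key u v hu hv hvx.symm
  -- S1 ∩ S2 has at most one element
  have hSinter : (S1 ∩ S2).ncard ≤ 1 := by
    rw [Set.ncard_le_one_iff]
    rintro x y ⟨hx1, hx2⟩ ⟨hy1, hy2⟩
    obtain ⟨u, hu, rfl⟩ := (hSmem a1 H1 x).mp hx1
    obtain ⟨v, hv, hvx⟩ := (hSmem a2 H2 _).mp hx2
    obtain ⟨u', hu', hy⟩ := (hSmem a1 H1 y).mp hy1
    obtain ⟨v', hv', hy'⟩ := (hSmem a2 H2 y).mp hy2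
    have hsub : ∀ a b : A, π (a - b) = π a - π b := fun a b => rfl
    have heq : π (u - u') = π (v - v') := by
      rw [hsub, hsub]
      have e1 : π u - π u' = (π a1 + π u) - y := by rw [hy]; abel
      have e2 : π v - π v' = (π a1 + π u) - y := by rw [hvx, hy']; abel
      rw [e1, e2]
    have h0 := key (u - u') (v - v') (sub_mem hu hu') (sub_mem hv hv') heq
    rw [hsub] at h0
    have huu : π u = π u' := sub_eq_zero.mp h0
    rw [hy, huu]
  rw [Set.image_union, Set.image_union]
  show (S1 ∪ S2).ncard ≥ (K1 ∪ K2).ncard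
  have h1 := Set.ncard_union_add_ncard_inter S1 S2 (Set.toFinite _) (Set.toFinite _)
  have h2 := Set.ncard_union_add_ncard_inter K1 K2 (Set.toFinite _) (Set.toFinite _)
  rw [hKinter, Set.ncard_singleton] at h2
  omega
end

section
/- In F_q² with q ≥ 2, three distinct one-dimensional subspaces H1, H2, H3 fail condition (R): there exist translates a1 + H1, a2 + H2, a3 + H3 whose union is strictly smaller than H1 ∪ H2 ∪ H3. -/
section aux

variable {F : Type*} [Field F] [Fintype F]

/-- Two distinct lines through the origin meet only at the origin. -/
lemma aux_inf_bot (H K : Submodule F (F × F))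
    (hH : Module.finrank F H = 1) (hK : Module.finrank F K = 1) (hne : H ≠ K) :
    H ⊓ K = ⊥ := by
  by_contra hbot
  have hle : Module.finrank F (H ⊓ K : Submodule F (F × F)) ≤ 1 := by
    rw [← hH]; exact Submodule.finrank_mono inf_le_left
  have hpos : Module.finrank F (H ⊓ K : Submodule F (F × F)) ≠ 0 := by
    simpa [Submodule.finrank_eq_zero] using hbot
  have heq : Module.finrank F (H ⊓ K : Submodule F (F × F)) = 1 := by omega
  have e1 : H ⊓ K = H := Submodule.eq_of_le_of_finrank_eq inf_le_left (heq.trans hH.symm)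
  have e2 : H ≤ K := e1 ▸ inf_le_right
  exact hne (Submodule.eq_of_le_of_finrank_eq e2 (hH.trans hK.symm))

lemma aux_sup_top (H K : Submodule F (F × F))
    (hH : Module.finrank F H = 1) (hK : Module.finrank F K = 1) (hne : H ≠ K) :
    H ⊔ K = ⊤ := by
  have hinf := aux_inf_bot H K hH hK hne
  have h := Submodule.finrank_sup_add_finrank_inf_eq H K
  rw [hinf, hH, hK] at h
  simp only [finrank_bot, add_zero] at h
  exact Submodule.eq_top_of_finrank_eq (by rw [h, Module.finrank_prod, Module.finrank_self])

/-- The unique intersection point of line `H` with translated line `a + K`. -/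
lemma aux_inter (H K : Submodule F (F × F))
    (hH : Module.finrank F H = 1) (hK : Module.finrank F K = 1) (hne : H ≠ K) (a : F × F) :
    ∃ p : F × F, (H : Set (F × F)) ∩ ((a + ·) '' (K : Set (F × F))) = {p} := by
  have htop := aux_sup_top H K hH hK hne
  have hinf := aux_inf_bot H K hH hK hne
  have ha : a ∈ H ⊔ K := htop ▸ Submodule.mem_top
  obtain ⟨u, hu, w, hw, huw⟩ := Submodule.mem_sup.1 ha
  refine ⟨u, ?_⟩
  ext x
  simp only [Set.mem_inter_iff, Set.mem_image, SetLike.mem_coe, Set.mem_singleton_iff]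
  constructor
  · rintro ⟨hx, k, hk, rfl⟩
    have hmem : a + k - u ∈ H ⊓ K := by
      constructor
      · exact H.sub_mem hx hu
      · have : a + k - u = w + k := by rw [← huw]; ring
        rw [this]; exact K.add_mem hw hk
    rw [hinf, Submodule.mem_bot] at hmem
    exact sub_eq_zero.mp hmem
  · rintro rfl
    exact ⟨hu, -w, K.neg_mem hw, by rw [← huw]; ring⟩

lemma aux_card (H : Submodule F (F × F)) (hH : Module.finrank F H = 1) :
    (H : Set (F × F)).ncard = Fintype.card F := by
  classical
  have h : Fintype.card H = Fintype.card F ^ Module.finrank F H := Module.card_eq_pow_finrank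
  rw [hH, pow_one] at h
  rw [← Nat.card_coe_set_eq]
  simpa [Nat.card_eq_fintype_card] using h

end aux

/-- In `F_q²` with `q ≥ 2`, three distinct one-dimensional subspaces
`H1, H2, H3` fail condition (R1'): there exist translates whose union is strictly
smaller than `H1 ∪ H2 ∪ H3`. -/
theorem three_lines_fail_R {F : Type*} [Field F] [Fintype F] (hq : 2 ≤ Fintype.card F)
    (H1 H2 H3 : Submodule F (F × F))
    (h1 : Module.finrank F H1 = 1) (h2 : Module.finrank F H2 = 1)
    (h3 : Module.finrank F H3 = 1)
    (h12 : H1 ≠ H2) (h13 : H1 ≠ H3) (h23 : H2 ≠ H3) :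
    ∃ a1 a2 a3 : F × F,
      (((a1 + ·) '' (H1 : Set (F × F))) ∪ ((a2 + ·) '' (H2 : Set (F × F))) ∪
          ((a3 + ·) '' (H3 : Set (F × F)))).ncard <
        ((H1 : Set (F × F)) ∪ (H2 : Set (F × F)) ∪ (H3 : Set (F × F))).ncard := by
  classical
  have hne_top : H3 ≠ ⊤ := by
    intro h
    rw [h, finrank_top, Module.finrank_prod, Module.finrank_self] at h3
    omega
  obtain ⟨a3, ha3⟩ : ∃ a3, a3 ∉ H3 := by
    by_contra h
    push_neg at h
    exact hne_top (Submodule.eq_top_iff'.2 h)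
  refine ⟨0, 0, a3, ?_⟩
  have himg : ∀ s : Set (F × F), (((0 : F × F) + ·) '' s) = s := by
    intro s; simp
  rw [himg, himg]
  set q := Fintype.card F with hqdef
  have hfin : ∀ s : Set (F × F), s.Finite := fun s => s.toFinite
  set A := (H1 : Set (F × F)) with hAdef
  set B := (H2 : Set (F × F)) with hBdef
  set C := (H3 : Set (F × F)) with hCdef
  have hA : A.ncard = q := aux_card H1 h1
  have hB : B.ncard = q := aux_card H2 h2
  have hCq : C.ncard = q := aux_card H3 h3
  set C' := ((a3 + ·) '' C) with hC'def
  have hC'q : C'.ncard = q := by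
    rw [hC'def, Set.ncard_image_of_injective _ (add_right_injective a3), hCq]
  have h0A : (0 : F × F) ∈ A := H1.zero_mem
  have h0B : (0 : F × F) ∈ B := H2.zero_mem
  have h0C : (0 : F × F) ∈ C := H3.zero_mem
  have h0C' : (0 : F × F) ∉ C' := by
    rintro ⟨k, hk, hk0⟩
    exact ha3 ((eq_neg_of_add_eq_zero_left hk0) ▸ H3.neg_mem hk)
  -- pairwise intersections of the original lines
  have hABs : A ∩ B = {(0 : F × F)} := by
    rw [hAdef, hBdef, ← Submodule.coe_inf, aux_inf_bot H1 H2 h1 h2 h12]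
    simp
  have hACs : A ∩ C = {(0 : F × F)} := by
    rw [hAdef, hCdef, ← Submodule.coe_inf, aux_inf_bot H1 H3 h1 h3 h13]
    simp
  have hBCs : B ∩ C = {(0 : F × F)} := by
    rw [hBdef, hCdef, ← Submodule.coe_inf, aux_inf_bot H2 H3 h2 h3 h23]
    simp
  -- intersection points with the translated line
  obtain ⟨p, hp⟩ := aux_inter H1 H3 h1 h3 h13 a3
  obtain ⟨p', hp'⟩ := aux_inter H2 H3 h2 h3 h23 a3
  have hpA : p ∈ A := (hp.symm.subset rfl).1
  have hpC' : p ∈ C' := (hp.symm.subset rfl).2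
  have hp'B : p' ∈ B := (hp'.symm.subset rfl).1
  have hp'C' : p' ∈ C' := (hp'.symm.subset rfl).2
  have hpp' : p ≠ p' := by
    intro h
    have hm : p ∈ A ∩ B := ⟨hpA, h ▸ hp'B⟩
    rw [hABs] at hm
    exact h0C' (hm ▸ hpC')
  -- difference descriptions
  have hBdA : B \ A = B \ {0} := by
    ext x
    simp only [Set.mem_diff, Set.mem_singleton_iff]
    constructor
    · rintro ⟨hx, hxA⟩
      exact ⟨hx, fun h => hxA (h ▸ h0A)⟩
    · rintro ⟨hx, hx0⟩
      refine ⟨hx, fun hxA => hx0 ?_⟩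
      have : x ∈ A ∩ B := ⟨hxA, hx⟩
      rwa [hABs] at this
  have hCdAB : C \ (A ∪ B) = C \ {0} := by
    ext x
    simp only [Set.mem_diff, Set.mem_union, Set.mem_singleton_iff, not_or]
    constructor
    · rintro ⟨hx, hxA, _⟩
      exact ⟨hx, fun h => hxA (h ▸ h0A)⟩
    · rintro ⟨hx, hx0⟩
      refine ⟨hx, fun hxA => hx0 ?_, fun hxB => hx0 ?_⟩
      · have : x ∈ A ∩ C := ⟨hxA, hx⟩
        rwa [hACs] at this
      · have : x ∈ B ∩ C := ⟨hxB, hx⟩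
        rwa [hBCs] at this
  have hC'dAB : C' \ (A ∪ B) = (C' \ {p}) \ {p'} := by
    ext x
    simp only [Set.mem_diff, Set.mem_union, Set.mem_singleton_iff, not_or]
    constructor
    · rintro ⟨hx, hxA, hxB⟩
      refine ⟨⟨hx, fun h => hxA ?_⟩, fun h => hxB ?_⟩
      · exact h ▸ hpA
      · exact h ▸ hp'B
    · rintro ⟨⟨hx, hxp⟩, hxp'⟩
      refine ⟨hx, fun hxA => hxp ?_, fun hxB => hxp' ?_⟩
      · have : x ∈ A ∩ C' := ⟨hxA, hx⟩
        rwa [hp] at this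
      · have : x ∈ B ∩ C' := ⟨hxB, hx⟩
        rwa [hp'] at this
  -- counting
  have hUAB : (A ∪ B).ncard = q + (q - 1) := by
    rw [← Set.union_diff_self, Set.ncard_union_eq Set.disjoint_sdiff_right (hfin _) (hfin _),
      hA, hBdA, Set.ncard_diff_singleton_of_mem h0B, hB]
  have hR : (A ∪ B ∪ C).ncard = q + (q - 1) + (q - 1) := by
    rw [← Set.union_diff_self (s := A ∪ B) (t := C),
      Set.ncard_union_eq Set.disjoint_sdiff_right (hfin _) (hfin _), hUAB, hCdAB,
      Set.ncard_diff_singleton_of_mem h0C, hCq]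
  have hp'mem : p' ∈ C' \ {p} := ⟨hp'C', by simpa using hpp'.symm⟩
  have hL : (A ∪ B ∪ C').ncard = q + (q - 1) + (q - 1 - 1) := by
    rw [← Set.union_diff_self (s := A ∪ B) (t := C'),
      Set.ncard_union_eq Set.disjoint_sdiff_right (hfin _) (hfin _), hUAB, hC'dAB,
      Set.ncard_diff_singleton_of_mem hp'mem,
      Set.ncard_diff_singleton_of_mem hpC', hC'q]
  rw [hL, hR]
  omega
end

section
/- Let R = ℤ[2i] ⊂ ℤ[i], and consider the ideals I1 = (2), I2 = (2i), I3 = (2+2i, 4) of R. Then I2 is not contained in I1 ∪ I3, but the translate 2 + I2 is contained in I1 ∪ I3. Consequently the ideals I1, I2, I3 of R fail condition (R). -/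
open Zsqrtd
/-- The order `ℤ[2i] = {a + 2bi : a, b ∈ ℤ}` inside the Gaussian integers. -/
def Zadj2i : Subring GaussianInt where
  carrier := {z : GaussianInt | 2 ∣ z.im}
  zero_mem' := ⟨0, by simp⟩
  one_mem' := ⟨0, by simp⟩
  add_mem' := by
    intro a b ha hb
    simpa [Zsqrtd.im_add] using dvd_add ha hb
  neg_mem' := by
    intro a ha
    simpa [Zsqrtd.im_neg] using ha.neg_right
  mul_mem' := by
    intro a b ha hb
    simp only [Set.mem_setOf_eq, Zsqrtd.im_mul] at *
    exact dvd_add (Dvd.dvd.mul_left hb _) (Dvd.dvd.mul_right ha _)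

/-- `2i` as an element of `ℤ[2i]`. -/
def twoI : Zadj2i := ⟨⟨0, 2⟩, ⟨1, rfl⟩⟩

/-- `2 + 2i` as an element of `ℤ[2i]`. -/
def twoPlusTwoI : Zadj2i := ⟨⟨2, 2⟩, ⟨1, rfl⟩⟩

namespace ZFRaux

def rr (x : Zadj2i) : ℤ := (x : GaussianInt).re
def ii (x : Zadj2i) : ℤ := (x : GaussianInt).im

def el (a b : ℤ) : Zadj2i := ⟨⟨a, 2*b⟩, ⟨b, rfl⟩⟩

@[simp] lemma rr_el (a b : ℤ) : rr (el a b) = a := rfl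
@[simp] lemma ii_el (a b : ℤ) : ii (el a b) = 2*b := rfl
@[simp] lemma rr_zero : rr 0 = 0 := rfl
@[simp] lemma ii_zero : ii 0 = 0 := rfl
@[simp] lemma rr_two : rr 2 = 2 := rfl
@[simp] lemma ii_two : ii 2 = 0 := rfl
@[simp] lemma rr_four : rr 4 = 4 := rfl
@[simp] lemma ii_four : ii 4 = 0 := rfl
@[simp] lemma rr_twoI : rr twoI = 0 := rfl
@[simp] lemma ii_twoI : ii twoI = 2 := rfl
@[simp] lemma rr_tp : rr twoPlusTwoI = 2 := rfl
@[simp] lemma ii_tp : ii twoPlusTwoI = 2 := rfl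
@[simp] lemma rr_add (x y : Zadj2i) : rr (x + y) = rr x + rr y := rfl
@[simp] lemma ii_add (x y : Zadj2i) : ii (x + y) = ii x + ii y := rfl
@[simp] lemma rr_sub (x y : Zadj2i) : rr (x - y) = rr x - rr y := rfl
@[simp] lemma ii_sub (x y : Zadj2i) : ii (x - y) = ii x - ii y := rfl
@[simp] lemma rr_mul (x y : Zadj2i) : rr (x * y) = rr x * rr y - ii x * ii y := by
  show ((x*y : Zadj2i) : GaussianInt).re = _
  push_cast
  simp [Zsqrtd.re_mul, rr, ii]; ring
@[simp] lemma ii_mul (x y : Zadj2i) : ii (x * y) = rr x * ii y + ii x * rr y := by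
  show ((x*y : Zadj2i) : GaussianInt).im = _
  push_cast
  simp [Zsqrtd.im_mul, rr, ii]

lemma ii_even (x : Zadj2i) : 2 ∣ ii x := x.2

lemma ext' {x y : Zadj2i} (h1 : rr x = rr y) (h2 : ii x = ii y) : x = y := by
  apply Subtype.ext
  exact Zsqrtd.ext h1 h2

lemma mem_I1 (x : Zadj2i) :
    x ∈ Ideal.span {(2 : Zadj2i)} ↔ 2 ∣ rr x ∧ 4 ∣ ii x := by
  rw [Ideal.mem_span_singleton]
  constructor
  · rintro ⟨c, rfl⟩
    have := ii_even c
    refine ⟨?_, ?_⟩ <;> simp <;> omega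
  · rintro ⟨⟨p, hp⟩, ⟨q, hq⟩⟩
    exact ⟨el p q, ext' (by simp; omega) (by simp; omega)⟩

lemma mem_I2 (x : Zadj2i) :
    x ∈ Ideal.span {twoI} ↔ 4 ∣ rr x ∧ 2 ∣ ii x := by
  rw [Ideal.mem_span_singleton]
  constructor
  · rintro ⟨c, rfl⟩
    have := ii_even c
    refine ⟨?_, ?_⟩ <;> simp <;> omega
  · rintro ⟨⟨p, hp⟩, ⟨q, hq⟩⟩
    exact ⟨el q (-p), ext' (by simp; omega) (by simp; omega)⟩

lemma mem_I3 (x : Zadj2i) :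
    x ∈ Ideal.span {twoPlusTwoI, (4 : Zadj2i)} ↔
      2 ∣ rr x ∧ 2 ∣ ii x ∧ 4 ∣ (rr x - ii x) := by
  rw [Ideal.mem_span_pair]
  constructor
  · rintro ⟨u, v, rfl⟩
    have hu := ii_even u
    have hv := ii_even v
    refine ⟨?_, ?_, ?_⟩ <;> simp <;> omega
  · rintro ⟨⟨p, hp⟩, ⟨q, hq⟩, ⟨m, hm⟩⟩
    exact ⟨el q 0, el m 0, ext' (by simp; omega) (by simp; omega)⟩

lemma mem_H (x : Zadj2i) :
    x ∈ (Ideal.span {(2 : Zadj2i)} ⊓ Ideal.span {twoI} ⊓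
        Ideal.span {twoPlusTwoI, (4 : Zadj2i)}) ↔ 4 ∣ rr x ∧ 4 ∣ ii x := by
  simp only [Submodule.mem_inf, mem_I1, mem_I2, mem_I3]
  omega

lemma mk_eq_iff (x y : Zadj2i) :
    Ideal.Quotient.mk (Ideal.span {(2 : Zadj2i)} ⊓ Ideal.span {twoI} ⊓
        Ideal.span {twoPlusTwoI, (4 : Zadj2i)}) x =
      Ideal.Quotient.mk (Ideal.span {(2 : Zadj2i)} ⊓ Ideal.span {twoI} ⊓
        Ideal.span {twoPlusTwoI, (4 : Zadj2i)}) y ↔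
      4 ∣ (rr x - rr y) ∧ 4 ∣ (ii x - ii y) := by
  rw [Ideal.Quotient.eq, mem_H]
  simp

end ZFRaux

open ZFRaux

set_option synthInstance.maxHeartbeats 1000000 in
/-- In `R = ℤ[2i]`, with `I1 = (2)`, `I2 = (2i)`, `I3 = (2+2i, 4)`:
`I2 ⊄ I1 ∪ I3`, but `2 + I2 ⊆ I1 ∪ I3`. Consequently `I1, I2, I3` fail condition `(R)`:
it is not the case that for all translates the projected union modulo
`I1 ⊓ I2 ⊓ I3` has cardinality at least that of the projected union of the ideals. -/
theorem zadj2i_fails_R :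
    ¬ ((Ideal.span {(2 : Zadj2i)} : Set Zadj2i) ∪ (Ideal.span {twoPlusTwoI, 4} : Set Zadj2i) ⊇
        (Ideal.span {twoI} : Set Zadj2i)) ∧
    ((2 + ·) '' (Ideal.span {twoI} : Set Zadj2i) ⊆
        (Ideal.span {(2 : Zadj2i)} : Set Zadj2i) ∪ (Ideal.span {twoPlusTwoI, 4} : Set Zadj2i)) ∧
    ¬ (∀ a1 a2 a3 : Zadj2i,
        ((Ideal.Quotient.mk (Ideal.span {(2 : Zadj2i)} ⊓ Ideal.span {twoI} ⊓
              Ideal.span {twoPlusTwoI, 4})) ''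
            ((Ideal.span {(2 : Zadj2i)} : Set Zadj2i) ∪ (Ideal.span {twoI} : Set Zadj2i) ∪
              (Ideal.span {twoPlusTwoI, 4} : Set Zadj2i))).ncard ≤
          ((Ideal.Quotient.mk (Ideal.span {(2 : Zadj2i)} ⊓ Ideal.span {twoI} ⊓
              Ideal.span {twoPlusTwoI, 4})) ''
            (((a1 + ·) '' (Ideal.span {(2 : Zadj2i)} : Set Zadj2i)) ∪
              ((a2 + ·) '' (Ideal.span {twoI} : Set Zadj2i)) ∪
              ((a3 + ·) '' (Ideal.span {twoPlusTwoI, 4} : Set Zadj2i)))).ncard) := by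
  refine ⟨?_, ?_, ?_⟩
  · -- I2 ⊄ I1 ∪ I3
    intro h
    have h2 : twoI ∈ (Ideal.span {twoI} : Set Zadj2i) := Ideal.subset_span rfl
    rcases h h2 with hm | hm
    · rw [SetLike.mem_coe, mem_I1] at hm
      simp at hm
    · rw [SetLike.mem_coe, mem_I3] at hm
      simp at hm
  · -- 2 + I2 ⊆ I1 ∪ I3
    rintro x ⟨y, hy, rfl⟩
    rw [SetLike.mem_coe, mem_I2] at hy
    obtain ⟨⟨u, hu⟩, ⟨v, hv⟩⟩ := hy
    rcases Int.even_or_odd v with ⟨k, hk⟩ | ⟨k, hk⟩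
    · left
      rw [SetLike.mem_coe, mem_I1]
      simp
      omega
    · right
      rw [SetLike.mem_coe, mem_I3]
      simp
      omega
  · -- condition (R) fails
    intro h
    have h := h 0 2 0
    set mkH := Ideal.Quotient.mk (Ideal.span {(2 : Zadj2i)} ⊓ Ideal.span {twoI} ⊓
        Ideal.span {twoPlusTwoI, (4 : Zadj2i)}) with hmk
    -- the four classes
    have hL : (mkH '' ((Ideal.span {(2 : Zadj2i)} : Set Zadj2i) ∪
          (Ideal.span {twoI} : Set Zadj2i) ∪ (Ideal.span {twoPlusTwoI, 4} : Set Zadj2i)))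
        = {mkH 0, mkH 2, mkH twoI, mkH twoPlusTwoI} := by
      apply subset_antisymm
      · rintro _ ⟨y, hy, rfl⟩
        rcases hy with (hy | hy) | hy
        · rw [SetLike.mem_coe, mem_I1] at hy
          obtain ⟨⟨p, hp⟩, ⟨q, hq⟩⟩ := hy
          rcases Int.even_or_odd p with ⟨k, hk⟩ | ⟨k, hk⟩
          · left; rw [hmk, mk_eq_iff]; simp; omega
          · right; left; rw [hmk, mk_eq_iff]; simp; omega
        · rw [SetLike.mem_coe, mem_I2] at hy
          obtain ⟨⟨p, hp⟩, ⟨q, hq⟩⟩ := hy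
          rcases Int.even_or_odd q with ⟨k, hk⟩ | ⟨k, hk⟩
          · left; rw [hmk, mk_eq_iff]; simp; omega
          · right; right; left; rw [hmk, mk_eq_iff]; simp; omega
        · rw [SetLike.mem_coe, mem_I3] at hy
          obtain ⟨⟨p, hp⟩, ⟨q, hq⟩, ⟨m, hm⟩⟩ := hy
          rcases Int.even_or_odd p with ⟨k, hk⟩ | ⟨k, hk⟩
          · left; rw [hmk, mk_eq_iff]; simp; omega
          · simp only [Set.mem_insert_iff, Set.mem_singleton_iff]; right; right; right; rw [hmk, mk_eq_iff]; simp; omega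
      · intro z hz
        rcases hz with rfl | rfl | rfl | rfl
        · exact ⟨0, Or.inl (Or.inl (by rw [SetLike.mem_coe, mem_I1]; simp)), rfl⟩
        · exact ⟨2, Or.inl (Or.inl (by rw [SetLike.mem_coe, mem_I1]; simp)), rfl⟩
        · exact ⟨twoI, Or.inl (Or.inr (by rw [SetLike.mem_coe, mem_I2]; simp)), rfl⟩
        · exact ⟨twoPlusTwoI, Or.inr (by rw [SetLike.mem_coe, mem_I3]; simp), rfl⟩
    have hcard4 : ({mkH 0, mkH 2, mkH twoI, mkH twoPlusTwoI} : Set _).ncard = 4 := by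
      have ne02 : mkH 0 ≠ mkH 2 := by rw [hmk, Ne, mk_eq_iff]; simp
      have ne0I : mkH 0 ≠ mkH twoI := by rw [hmk, Ne, mk_eq_iff]; simp
      have ne0T : mkH 0 ≠ mkH twoPlusTwoI := by rw [hmk, Ne, mk_eq_iff]; simp
      have ne2I : mkH 2 ≠ mkH twoI := by rw [hmk, Ne, mk_eq_iff]; simp
      have ne2T : mkH 2 ≠ mkH twoPlusTwoI := by rw [hmk, Ne, mk_eq_iff]; simp
      have neIT : mkH twoI ≠ mkH twoPlusTwoI := by rw [hmk, Ne, mk_eq_iff]; simp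
      have fin1 : ({mkH twoI, mkH twoPlusTwoI} : Set _).Finite :=
        (Set.finite_singleton _).insert _
      have fin2 : ({mkH 2, mkH twoI, mkH twoPlusTwoI} : Set _).Finite := fin1.insert _
      rw [Set.ncard_insert_of_notMem (by simp only [Set.mem_insert_iff, Set.mem_singleton_iff, not_or]; exact ⟨ne02, ne0I, ne0T⟩) fin2,
        Set.ncard_insert_of_notMem (by simp only [Set.mem_insert_iff, Set.mem_singleton_iff, not_or]; exact ⟨ne2I, ne2T⟩) fin1,
        Set.ncard_pair neIT]
    have hR : (mkH '' (((0 + ·) '' (Ideal.span {(2 : Zadj2i)} : Set Zadj2i)) ∪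
          ((2 + ·) '' (Ideal.span {twoI} : Set Zadj2i)) ∪
          ((0 + ·) '' (Ideal.span {twoPlusTwoI, 4} : Set Zadj2i))))
        ⊆ {mkH 0, mkH 2, mkH twoPlusTwoI} := by
      rintro _ ⟨z, hz, rfl⟩
      rcases hz with (⟨y, hy, rfl⟩ | ⟨y, hy, rfl⟩) | ⟨y, hy, rfl⟩
      · rw [SetLike.mem_coe, mem_I1] at hy
        obtain ⟨⟨p, hp⟩, ⟨q, hq⟩⟩ := hy
        rcases Int.even_or_odd p with ⟨k, hk⟩ | ⟨k, hk⟩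
        · left; rw [hmk, mk_eq_iff]; simp; omega
        · right; left; rw [hmk, mk_eq_iff]; simp; omega
      · rw [SetLike.mem_coe, mem_I2] at hy
        obtain ⟨⟨p, hp⟩, ⟨q, hq⟩⟩ := hy
        rcases Int.even_or_odd q with ⟨k, hk⟩ | ⟨k, hk⟩
        · right; left; rw [hmk, mk_eq_iff]; simp; omega
        · simp only [Set.mem_insert_iff, Set.mem_singleton_iff]; right; right; rw [hmk, mk_eq_iff]; simp; omega
      · rw [SetLike.mem_coe, mem_I3] at hy
        obtain ⟨⟨p, hp⟩, ⟨q, hq⟩, ⟨m, hm⟩⟩ := hy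
        rcases Int.even_or_odd p with ⟨k, hk⟩ | ⟨k, hk⟩
        · left; rw [hmk, mk_eq_iff]; simp; omega
        · simp only [Set.mem_insert_iff, Set.mem_singleton_iff]; right; right; rw [hmk, mk_eq_iff]; simp; omega
    have hRc : (mkH '' (((0 + ·) '' (Ideal.span {(2 : Zadj2i)} : Set Zadj2i)) ∪
          ((2 + ·) '' (Ideal.span {twoI} : Set Zadj2i)) ∪
          ((0 + ·) '' (Ideal.span {twoPlusTwoI, 4} : Set Zadj2i)))).ncard ≤ 3 := by
      have fin3 : ({mkH 0, mkH 2, mkH twoPlusTwoI} : Set _).Finite :=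
        ((Set.finite_singleton _).insert _).insert _
      refine le_trans (Set.ncard_le_ncard hR fin3) ?_
      refine le_trans (Set.ncard_insert_le _ _) ?_
      have := Set.ncard_insert_le (mkH 2) ({mkH twoPlusTwoI} : Set _)
      simp only [Set.ncard_singleton] at this ⊢
      omega
    rw [hL] at h
    rw [hcard4] at h
    omega
end

section
/- Let R be a finite commutative ring with a direct product decomposition R ≅ R1 × … × Rk. Then every finite set of ideals of R satisfies condition (R1') if and only if for each i, every finite set of ideals of Ri satisfies (R1'). -/
/-- A finite commutative ring satisfies condition (R1') if for every finite collection
of ideals `I₁, …, I_r` and all `a₁, …, a_r`, `|⋃ⱼ (aⱼ + Iⱼ)| ≥ |⋃ⱼ Iⱼ|`. -/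
def SatisfiesR1' (R : Type*) [CommRing R] : Prop :=
  ∀ (r : ℕ) (I : Fin r → Ideal R) (a : Fin r → R),
    (⋃ j, ((I j : Set R))).ncard ≤ (⋃ j, (a j + ·) '' (I j : Set R)).ncard

open Set

section Aux

/-- An index-flexible version of condition (R1'). -/
def R1w (R : Type*) [CommRing R] : Prop :=
  ∀ (ι : Type) [Fintype ι] (I : ι → Ideal R) (a : ι → R),
    (⋃ j, ((I j : Set R))).ncard ≤ (⋃ j, (a j + ·) '' (I j : Set R)).ncard

lemma R1w_of {R : Type*} [CommRing R] (h : SatisfiesR1' R) : R1w R := by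
  intro ι _ I a
  have e := (Fintype.equivFin ι).symm
  have h1 : (⋃ j, ((I j : Set R))) = ⋃ j, ((I (e j) : Set R)) :=
    (e.surjective.iUnion_comp _).symm
  have h2 : (⋃ j, (a j + ·) '' (I j : Set R)) = ⋃ j, (a (e j) + ·) '' (I (e j) : Set R) :=
    (e.surjective.iUnion_comp _).symm
  rw [h1, h2]
  exact h _ (fun j => I (e j)) (fun j => a (e j))

lemma ncard_fiber_fst {A B : Type*} [Fintype A] [Fintype B] (s : Set (A × B)) :
    s.ncard = ∑ x : A, {y | (x, y) ∈ s}.ncard := by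
  classical
  rw [Set.ncard_eq_toFinset_card' s,
    Finset.card_eq_sum_card_fiberwise (f := Prod.fst) (t := Finset.univ)
      (fun x _ => Finset.mem_univ _)]
  refine Finset.sum_congr rfl fun x _ => ?_
  rw [Set.ncard_eq_toFinset_card' {y | (x, y) ∈ s}]
  refine Finset.card_nbij (fun p => p.2) ?_ ?_ ?_
  · rintro ⟨x', y⟩ hp
    simp only [Finset.mem_coe, Finset.mem_filter, Set.mem_toFinset] at hp ⊢
    obtain ⟨h1, rfl⟩ := hp
    exact h1
  · rintro ⟨x1, y1⟩ h1 ⟨x2, y2⟩ h2 h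
    simp only [Finset.coe_filter, Set.mem_toFinset, Set.mem_setOf_eq] at h1 h2
    cases h1.2; cases h2.2; cases h
    rfl
  · intro y hy
    simp only [Finset.mem_coe, Set.mem_toFinset, Set.mem_setOf_eq] at hy
    refine ⟨(x, y), ?_, rfl⟩
    simp only [Finset.coe_filter, Set.mem_toFinset, Set.mem_setOf_eq]
    exact ⟨hy, trivial⟩

lemma ncard_fiber_snd {A B : Type*} [Fintype A] [Fintype B] (s : Set (A × B)) :
    s.ncard = ∑ y : B, {x | (x, y) ∈ s}.ncard := by
  classical
  have h : s.ncard = ((Equiv.prodComm A B) '' s).ncard :=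
    (Set.ncard_image_of_injective s (Equiv.prodComm A B).injective).symm
  rw [h, ncard_fiber_fst]
  refine Finset.sum_congr rfl fun y _ => ?_
  congr 1
  ext x
  constructor
  · rintro ⟨⟨a, b⟩, h, rfl, rfl⟩
    exact h
  · intro h
    exact ⟨(x, y), h, rfl⟩

lemma key_snd {A B : Type*} [Fintype A] [CommRing B] [Fintype B] (hB : R1w B) (r : ℕ)
    (S : Fin r → Set A) (K : Fin r → Ideal B) (b : Fin r → B) :
    (⋃ j, S j ×ˢ (K j : Set B)).ncard ≤ (⋃ j, S j ×ˢ ((b j + ·) '' (K j : Set B))).ncard := by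
  classical
  rw [ncard_fiber_fst, ncard_fiber_fst]
  refine Finset.sum_le_sum fun x _ => ?_
  have h1 : {y | (x, y) ∈ ⋃ j, S j ×ˢ (K j : Set B)} =
      ⋃ (j : {j // x ∈ S j}), ((K j.1 : Set B)) := by
    ext y
    simp only [mem_setOf_eq, Set.mem_iUnion, Set.mem_prod]
    exact ⟨fun ⟨j, hx, hy⟩ => ⟨⟨j, hx⟩, hy⟩, fun ⟨⟨j, hx⟩, hy⟩ => ⟨j, hx, hy⟩⟩
  have h2 : {y | (x, y) ∈ ⋃ j, S j ×ˢ ((b j + ·) '' (K j : Set B))} =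
      ⋃ (j : {j // x ∈ S j}), (b j.1 + ·) '' ((K j.1 : Set B)) := by
    ext y
    simp only [mem_setOf_eq, Set.mem_iUnion, Set.mem_prod]
    exact ⟨fun ⟨j, hx, hy⟩ => ⟨⟨j, hx⟩, hy⟩, fun ⟨⟨j, hx⟩, hy⟩ => ⟨j, hx, hy⟩⟩
  rw [h1, h2]
  haveI : Fintype {j // x ∈ S j} := Subtype.fintype _
  exact hB {j // x ∈ S j} (fun j => K j.1) (fun j => b j.1)

lemma key_fst {A B : Type*} [CommRing A] [Fintype A] [Fintype B] (hA : R1w A) (r : ℕ)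
    (T : Fin r → Set B) (I : Fin r → Ideal A) (a : Fin r → A) :
    (⋃ j, (I j : Set A) ×ˢ T j).ncard ≤ (⋃ j, ((a j + ·) '' (I j : Set A)) ×ˢ T j).ncard := by
  classical
  rw [ncard_fiber_snd, ncard_fiber_snd]
  refine Finset.sum_le_sum fun y _ => ?_
  have h1 : {x | (x, y) ∈ ⋃ j, (I j : Set A) ×ˢ T j} =
      ⋃ (j : {j // y ∈ T j}), ((I j.1 : Set A)) := by
    ext x
    simp only [mem_setOf_eq, Set.mem_iUnion, Set.mem_prod]
    exact ⟨fun ⟨j, hx, hy⟩ => ⟨⟨j, hy⟩, hx⟩, fun ⟨⟨j, hy⟩, hx⟩ => ⟨j, hx, hy⟩⟩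
  have h2 : {x | (x, y) ∈ ⋃ j, ((a j + ·) '' (I j : Set A)) ×ˢ T j} =
      ⋃ (j : {j // y ∈ T j}), (a j.1 + ·) '' ((I j.1 : Set A)) := by
    ext x
    simp only [mem_setOf_eq, Set.mem_iUnion, Set.mem_prod]
    exact ⟨fun ⟨j, hx, hy⟩ => ⟨⟨j, hy⟩, hx⟩, fun ⟨⟨j, hy⟩, hx⟩ => ⟨j, hx, hy⟩⟩
  rw [h1, h2]
  haveI : Fintype {j // y ∈ T j} := Subtype.fintype _
  exact hA {j // y ∈ T j} (fun j => I j.1) (fun j => a j.1)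

lemma coe_ideal_prod {A B : Type*} [CommRing A] [CommRing B] (I : Ideal A) (K : Ideal B) :
    ((Ideal.prod I K : Ideal (A × B)) : Set (A × B)) = (I : Set A) ×ˢ (K : Set B) := by
  ext ⟨x, y⟩
  simp [Ideal.mem_prod, Set.mem_prod]

lemma image_add_prod {A B : Type*} [CommRing A] [CommRing B] (a : A × B) (s : Set A) (t : Set B) :
    (a + ·) '' (s ×ˢ t) = ((a.1 + ·) '' s) ×ˢ ((a.2 + ·) '' t) := by
  ext ⟨x, y⟩
  constructor
  · rintro ⟨⟨u, v⟩, ⟨hu, hv⟩, h⟩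
    obtain ⟨rfl, rfl⟩ := Prod.mk_inj.mp h.symm
    exact ⟨⟨u, hu, rfl⟩, ⟨v, hv, rfl⟩⟩
  · rintro ⟨⟨u, hu, rfl⟩, ⟨v, hv, rfl⟩⟩
    exact ⟨(u, v), ⟨hu, hv⟩, rfl⟩

lemma ncard_prod' {A B : Type*} [Fintype A] [Fintype B] (s : Set A) (t : Set B) :
    (s ×ˢ t).ncard = s.ncard * t.ncard := by
  classical
  rw [Set.ncard_eq_toFinset_card' s, Set.ncard_eq_toFinset_card' t,
    Set.ncard_eq_toFinset_card' (s ×ˢ t), Set.toFinset_prod, Finset.card_product]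

lemma satisfiesR1'_of_ringEquiv {R S : Type*} [CommRing R] [CommRing S] (e : R ≃+* S)
    (h : SatisfiesR1' R) : SatisfiesR1' S := by
  intro r I a
  set I' : Fin r → Ideal R := fun j => (I j).comap (e : R →+* S) with hI'
  have key : ∀ j, (e : R → S) '' ((I' j : Set R)) = (I j : Set S) := by
    intro j
    ext y
    constructor
    · rintro ⟨x, hx, rfl⟩
      exact hx
    · intro hy
      refine ⟨e.symm y, ?_, by simp⟩
      have hy' : (e : R →+* S) (e.symm y) ∈ I j := by simpa using hy
      exact Ideal.mem_comap.mpr hy'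
  have h1 : (⋃ j, (I j : Set S)) = (e : R → S) '' (⋃ j, (I' j : Set R)) := by
    rw [Set.image_iUnion]
    exact Set.iUnion_congr fun j => (key j).symm
  have h2 : (⋃ j, (a j + ·) '' (I j : Set S)) =
      (e : R → S) '' (⋃ j, (e.symm (a j) + ·) '' (I' j : Set R)) := by
    rw [Set.image_iUnion]
    refine Set.iUnion_congr fun j => ?_
    rw [Set.image_image]
    have : ∀ x : R, e (e.symm (a j) + x) = a j + e x := by
      intro x; rw [map_add]; simp
    calc (a j + ·) '' (I j : Set S) = (a j + ·) '' ((e : R → S) '' (I' j : Set R)) := by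
          rw [key j]
      _ = (fun x => a j + e x) '' (I' j : Set R) := Set.image_image _ _ _
      _ = (fun x => e (e.symm (a j) + x)) '' (I' j : Set R) := by
          exact Set.image_congr fun x _ => (this x).symm
  rw [h1, h2, Set.ncard_image_of_injective _ e.injective,
    Set.ncard_image_of_injective _ e.injective]
  exact h r I' (fun j => e.symm (a j))

lemma satisfiesR1'_of_subsingleton (R : Type*) [CommRing R] [Subsingleton R] :
    SatisfiesR1' R := by
  intro r I a
  have h : ∀ j, (a j + ·) '' (I j : Set R) = (I j : Set R) := by
    intro j
    have : (a j + ·) = id := funext fun x => Subsingleton.elim _ _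
    rw [this, Set.image_id]
  rw [Set.iUnion_congr h]

lemma prod_satisfies {A B : Type*} [CommRing A] [Finite A] [CommRing B] [Finite B]
    (hA : SatisfiesR1' A) (hB : SatisfiesR1' B) : SatisfiesR1' (A × B) := by
  classical
  haveI : Fintype A := Fintype.ofFinite A
  haveI : Fintype B := Fintype.ofFinite B
  intro r J a
  set I : Fin r → Ideal A := fun j => Ideal.map (RingHom.fst A B) (J j) with hI
  set K : Fin r → Ideal B := fun j => Ideal.map (RingHom.snd A B) (J j) with hK
  have hJ : ∀ j, ((J j : Set (A × B))) = (I j : Set A) ×ˢ (K j : Set B) := by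
    intro j
    calc ((J j : Set (A × B))) = ((Ideal.prod (I j) (K j) : Ideal (A × B)) : Set (A × B)) := by
          rw [← Ideal.ideal_prod_eq]
      _ = (I j : Set A) ×ˢ (K j : Set B) := coe_ideal_prod _ _
  calc (⋃ j, (J j : Set (A × B))).ncard
      = (⋃ j, (I j : Set A) ×ˢ (K j : Set B)).ncard := by rw [Set.iUnion_congr hJ]
    _ ≤ (⋃ j, (((a j).1 + ·) '' (I j : Set A)) ×ˢ (K j : Set B)).ncard :=
        key_fst (R1w_of hA) r (fun j => (K j : Set B)) I (fun j => (a j).1)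
    _ ≤ (⋃ j, (((a j).1 + ·) '' (I j : Set A)) ×ˢ (((a j).2 + ·) '' (K j : Set B))).ncard :=
        key_snd (R1w_of hB) r (fun j => ((a j).1 + ·) '' (I j : Set A)) K (fun j => (a j).2)
    _ = (⋃ j, (a j + ·) '' (J j : Set (A × B))).ncard := by
        refine congrArg Set.ncard (Set.iUnion_congr fun j => ?_)
        rw [hJ j, image_add_prod]

lemma fst_satisfies {A B : Type*} [CommRing A] [Finite A] [CommRing B] [Finite B]
    (h : SatisfiesR1' (A × B)) : SatisfiesR1' A := by
  classical
  haveI : Fintype A := Fintype.ofFinite A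
  haveI : Fintype B := Fintype.ofFinite B
  intro r I a
  have hh := h r (fun j => Ideal.prod (I j) ⊤) (fun j => (a j, 0))
  have e1 : (⋃ j, ((Ideal.prod (I j) (⊤ : Ideal B) : Ideal (A × B)) : Set (A × B))) =
      (⋃ j, (I j : Set A)) ×ˢ (Set.univ : Set B) := by
    rw [Set.iUnion_prod_const]
    exact Set.iUnion_congr fun j => by rw [coe_ideal_prod]; rfl
  have e2 : (⋃ j, ((a j, (0 : B)) + ·) '' ((Ideal.prod (I j) (⊤ : Ideal B) : Ideal (A × B)) :
      Set (A × B))) = (⋃ j, (a j + ·) '' (I j : Set A)) ×ˢ (Set.univ : Set B) := by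
    rw [Set.iUnion_prod_const]
    refine Set.iUnion_congr fun j => ?_
    rw [coe_ideal_prod, image_add_prod]
    congr 1
    ext y
    simp
  rw [e1, e2, ncard_prod', ncard_prod'] at hh
  have hpos : 0 < (Set.univ : Set B).ncard := by
    rw [Set.ncard_univ]
    exact Nat.card_pos
  exact Nat.le_of_mul_le_mul_right hh hpos

lemma snd_satisfies {A B : Type*} [CommRing A] [Finite A] [CommRing B] [Finite B]
    (h : SatisfiesR1' (A × B)) : SatisfiesR1' B := by
  classical
  haveI : Fintype A := Fintype.ofFinite A
  haveI : Fintype B := Fintype.ofFinite B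
  intro r I a
  have hh := h r (fun j => Ideal.prod ⊤ (I j)) (fun j => ((0 : A), a j))
  have e1 : (⋃ j, ((Ideal.prod (⊤ : Ideal A) (I j) : Ideal (A × B)) : Set (A × B))) =
      (Set.univ : Set A) ×ˢ (⋃ j, (I j : Set B)) := by
    rw [Set.prod_iUnion]
    exact Set.iUnion_congr fun j => by rw [coe_ideal_prod]; rfl
  have e2 : (⋃ j, (((0 : A), a j) + ·) '' ((Ideal.prod (⊤ : Ideal A) (I j) : Ideal (A × B)) :
      Set (A × B))) = (Set.univ : Set A) ×ˢ (⋃ j, (a j + ·) '' (I j : Set B)) := by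
    rw [Set.prod_iUnion]
    refine Set.iUnion_congr fun j => ?_
    rw [coe_ideal_prod, image_add_prod]
    congr 1
    ext y
    simp
  rw [e1, e2, ncard_prod', ncard_prod'] at hh
  have hpos : 0 < (Set.univ : Set A).ncard := by
    rw [Set.ncard_univ]
    exact Nat.card_pos
  exact Nat.le_of_mul_le_mul_left hh hpos

/-- Ring equivalence between a pi type over `Fin (k+1)` and the product of the head
and the pi type over the tail. -/
def piSuccRingEquiv {k : ℕ} (Rs : Fin (k + 1) → Type*) [∀ i, CommRing (Rs i)] :
    (∀ i, Rs i) ≃+* Rs 0 × ∀ i : Fin k, Rs i.succ where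
  toFun f := (f 0, fun i => f i.succ)
  invFun p := Fin.cons p.1 p.2
  left_inv f := by
    funext i
    refine Fin.cases ?_ (fun j => ?_) i
    · rfl
    · simp [Fin.cons_succ]
  right_inv p := by
    refine Prod.ext rfl ?_
    funext i
    simp [Fin.cons_succ]
  map_mul' _ _ := rfl
  map_add' _ _ := rfl

lemma pi_satisfies_iff : ∀ (k : ℕ) (Rs : Fin k → Type u) [∀ i, CommRing (Rs i)]
    [∀ i, Finite (Rs i)], SatisfiesR1' (∀ i, Rs i) ↔ ∀ i, SatisfiesR1' (Rs i) := by
  intro k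
  induction k with
  | zero =>
    intro Rs _ _
    haveI : Subsingleton (∀ i : Fin 0, Rs i) := ⟨fun a b => funext fun i => i.elim0⟩
    exact ⟨fun _ i => i.elim0, fun _ => satisfiesR1'_of_subsingleton _⟩
  | succ k ih =>
    intro Rs _ _
    constructor
    · intro h i
      have hprod := satisfiesR1'_of_ringEquiv (piSuccRingEquiv Rs) h
      refine Fin.cases ?_ (fun j => ?_) i
      · exact fst_satisfies hprod
      · exact (ih (fun i => Rs i.succ)).1 (snd_satisfies hprod) j
    · intro h
      have hrest := (ih (fun i => Rs i.succ)).2 (fun i => h i.succ)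
      exact satisfiesR1'_of_ringEquiv (piSuccRingEquiv Rs).symm (prod_satisfies (h 0) hrest)

end Aux

/-- If a finite commutative ring `R` decomposes as `R ≅ R₁ × ⋯ × R_k`,
then every finite set of ideals of `R` satisfies (R1') iff for each `i`, every finite set
of ideals of `Rᵢ` satisfies (R1'). -/
theorem satisfiesR1'_pi_iff (R : Type*) [CommRing R] [Finite R]
    (k : ℕ) (Rs : Fin k → Type*) [∀ i, CommRing (Rs i)] [∀ i, Finite (Rs i)]
    (e : R ≃+* ∀ i, Rs i) :
    SatisfiesR1' R ↔ ∀ i, SatisfiesR1' (Rs i) := by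
  rw [← pi_satisfies_iff k Rs]
  exact ⟨satisfiesR1'_of_ringEquiv e, satisfiesR1'_of_ringEquiv e.symm⟩
end

section
/- Let R be a finite commutative local ring with at least two distinct minimal nonzero ideals. Then there exist three ideals I1, I2, I3 of R and elements a1, a2, a3 ∈ R such that |(a1+I1) ∪ (a2+I2) ∪ (a3+I3)| < |I1 ∪ I2 ∪ I3|. -/
/-- In a finite local ring, a minimal nonzero ideal is killed by every nonunit. -/
lemma min_ideal_ann {R : Type*} [CommRing R] [Finite R] [IsLocalRing R]
    {I : Ideal R} (hI : I ≠ ⊥) (hImin : ∀ K : Ideal R, K ≠ ⊥ → K ≤ I → K = I)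
    {r : R} (hr : ¬ IsUnit r) {z : R} (hz : z ∈ I) : r * z = 0 := by
  have hfg : I.FG := IsNoetherian.noetherian I
  have hm : IsLocalRing.maximalIdeal R * I = ⊥ := by
    by_contra h
    have hle : IsLocalRing.maximalIdeal R * I ≤ I := Ideal.mul_le_right
    have heq := hImin _ h hle
    have := Submodule.eq_bot_of_le_smul_of_le_jacobson_bot (IsLocalRing.maximalIdeal R) I hfg
      (by rw [Ideal.smul_eq_mul, heq])
      (by rw [IsLocalRing.jacobson_eq_maximalIdeal ⊥ bot_ne_top])
    exact hI this
  have hmem : r * z ∈ IsLocalRing.maximalIdeal R * I :=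
    Ideal.mul_mem_mul (by rwa [IsLocalRing.mem_maximalIdeal, mem_nonunits_iff]) hz
  rw [hm] at hmem
  simpa using hmem

/-- A finite commutative local ring `R` with at least two distinct
minimal nonzero ideals admits three ideals `I1, I2, I3` and elements `a1, a2, a3` with
`|(a1+I1) ∪ (a2+I2) ∪ (a3+I3)| < |I1 ∪ I2 ∪ I3|`. -/
theorem two_minimal_ideals_fail_R (R : Type*) [CommRing R] [Finite R] [IsLocalRing R]
    (I J : Ideal R) (hIJ : I ≠ J)
    (hI : I ≠ ⊥) (hImin : ∀ K : Ideal R, K ≠ ⊥ → K ≤ I → K = I)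
    (hJ : J ≠ ⊥) (hJmin : ∀ K : Ideal R, K ≠ ⊥ → K ≤ J → K = J) :
    ∃ (I1 I2 I3 : Ideal R) (a1 a2 a3 : R),
      (((a1 + ·) '' (I1 : Set R)) ∪ ((a2 + ·) '' (I2 : Set R)) ∪
          ((a3 + ·) '' (I3 : Set R))).ncard <
        ((I1 : Set R) ∪ (I2 : Set R) ∪ (I3 : Set R)).ncard := by
  classical
  -- I ⊓ J = ⊥
  have hIJbot : I ⊓ J = ⊥ := by
    by_contra h
    have h1 := hImin _ h inf_le_left
    have h2 := hJmin _ h inf_le_right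
    exact hIJ (h1.symm.trans h2)
  obtain ⟨x, hxI, hx0⟩ := (Submodule.ne_bot_iff I).mp hI
  obtain ⟨y, hyJ, hy0⟩ := (Submodule.ne_bot_iff J).mp hJ
  -- annihilation facts
  have hax : ∀ r : R, ¬ IsUnit r → r * x = 0 := fun r hr => min_ideal_ann hI hImin hr hxI
  have hay : ∀ r : R, ¬ IsUnit r → r * y = 0 := fun r hr => min_ideal_ann hJ hJmin hr hyJ
  have hux : ∀ r : R, r * x = 0 → ¬ IsUnit r := by
    rintro r h ⟨u, rfl⟩
    exact hx0 (by calc x = ↑u⁻¹ * (↑u * x) := by rw [← mul_assoc]; simp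
      _ = 0 := by rw [h, mul_zero])
  have huy : ∀ r : R, r * y = 0 → ¬ IsUnit r := by
    rintro r h ⟨u, rfl⟩
    exact hy0 (by calc y = ↑u⁻¹ * (↑u * y) := by rw [← mul_assoc]; simp
      _ = 0 := by rw [h, mul_zero])
  -- elements of I⊓J are zero
  have hzero : ∀ z : R, z ∈ I → z ∈ J → z = 0 := by
    intro z h1 h2
    have : z ∈ I ⊓ J := ⟨h1, h2⟩
    rwa [hIJbot, Ideal.mem_bot] at this
  -- the key cancellation: r*x = s*y forces both to vanish
  have hcancel : ∀ r s : R, r * x = s * y → r * x = 0 ∧ s * y = 0 := by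
    intro r s h
    have h0 : r * x = 0 := hzero _ (I.mul_mem_left r hxI) (h ▸ J.mul_mem_left s hyJ)
    exact ⟨h0, by rw [← h, h0]⟩
  -- I and J are spanned by x and y
  have hIspan : Ideal.span {x} = I :=
    hImin _ (by simpa [Ideal.span_singleton_eq_bot] using hx0)
      ((Ideal.span_singleton_le_iff_mem _).mpr hxI)
  have hJspan : Ideal.span {y} = J :=
    hJmin _ (by simpa [Ideal.span_singleton_eq_bot] using hy0)
      ((Ideal.span_singleton_le_iff_mem _).mpr hyJ)
  have hmemI : ∀ z : R, z ∈ I ↔ ∃ t : R, t * x = z := by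
    intro z; rw [← hIspan, Ideal.mem_span_singleton']
  have hmemJ : ∀ z : R, z ∈ J ↔ ∃ t : R, t * y = z := by
    intro z; rw [← hJspan, Ideal.mem_span_singleton']
  set K : Ideal R := Ideal.span {x + y} with hK
  have hmemK : ∀ z : R, z ∈ K ↔ ∃ t : R, t * (x + y) = z := by
    intro z; rw [hK, Ideal.mem_span_singleton']
  have hxy0 : x + y ≠ 0 := by
    intro h
    have hxJ : x ∈ J := by
      rw [eq_neg_of_add_eq_zero_left h]; exact J.neg_mem hyJ
    exact hx0 (hzero x hxI hxJ)
  -- set-level intersection computations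
  have S_IJ : (I : Set R) ∩ (J : Set R) = {0} := by
    ext z
    simp only [Set.mem_inter_iff, SetLike.mem_coe, Set.mem_singleton_iff]
    exact ⟨fun ⟨h1, h2⟩ => hzero z h1 h2, by rintro rfl; exact ⟨I.zero_mem, J.zero_mem⟩⟩
  have S_IK : (I : Set R) ∩ (K : Set R) = {0} := by
    ext z
    simp only [Set.mem_inter_iff, SetLike.mem_coe, Set.mem_singleton_iff]
    constructor
    · rintro ⟨h1, h2⟩
      obtain ⟨t, rfl⟩ := (hmemI z).mp h1
      obtain ⟨s, hs⟩ := (hmemK _).mp h2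
      have h3 : (t - s) * x = s * y := by linear_combination -hs
      have h4 := (hcancel _ _ h3).2
      have h5 : ¬ IsUnit s := huy s h4
      have : s * (x + y) = 0 := by rw [mul_add, hax s h5, h4, add_zero]
      rw [← hs, this]
    · rintro rfl; exact ⟨I.zero_mem, K.zero_mem⟩
  have S_JK : (J : Set R) ∩ (K : Set R) = {0} := by
    ext z
    simp only [Set.mem_inter_iff, SetLike.mem_coe, Set.mem_singleton_iff]
    constructor
    · rintro ⟨h1, h2⟩
      obtain ⟨t, rfl⟩ := (hmemJ z).mp h1
      obtain ⟨s, hs⟩ := (hmemK _).mp h2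
      have h3 : s * x = (t - s) * y := by linear_combination hs
      have h4 := (hcancel _ _ h3).1
      have h5 : ¬ IsUnit s := hux s h4
      have : s * (x + y) = 0 := by rw [mul_add, h4, hay s h5, add_zero]
      rw [← hs, this]
    · rintro rfl; exact ⟨J.zero_mem, K.zero_mem⟩
  -- the coset x + J
  set C2 : Set R := (fun z => x + z) '' (J : Set R) with hC2
  have S_IC2 : (I : Set R) ∩ C2 = {x} := by
    ext z
    simp only [hC2, Set.mem_inter_iff, SetLike.mem_coe, Set.mem_image, Set.mem_singleton_iff]
    constructor
    · rintro ⟨h1, w, hwJ, rfl⟩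
      obtain ⟨t, ht⟩ := (hmemI _).mp h1
      obtain ⟨s, rfl⟩ := (hmemJ w).mp hwJ
      have h3 : (t - 1) * x = s * y := by linear_combination ht
      have h4 := (hcancel _ _ h3).2
      rw [h4, add_zero]
    · rintro rfl
      exact ⟨hxI, 0, J.zero_mem, by rw [add_zero]⟩
  have S_C2K : C2 ∩ (K : Set R) = {x + y} := by
    ext z
    simp only [hC2, Set.mem_inter_iff, SetLike.mem_coe, Set.mem_image, Set.mem_singleton_iff]
    constructor
    · rintro ⟨⟨w, hwJ, rfl⟩, h2⟩
      obtain ⟨t, rfl⟩ := (hmemJ w).mp hwJ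
      obtain ⟨s, hs⟩ := (hmemK _).mp h2
      have h3 : (s - 1) * x = (t - s) * y := by linear_combination hs
      have h4 := (hcancel _ _ h3).1
      have h5 : ¬ IsUnit (s - 1) := hux _ h4
      have h6 : (s - 1) * (x + y) = 0 := by
        rw [mul_add, h4, hay _ h5, add_zero]
      have : s * (x + y) = x + y := by linear_combination h6
      rw [← hs, this]
    · rintro rfl
      exact ⟨⟨y, hyJ, rfl⟩, (hmemK _).mpr ⟨1, one_mul _⟩⟩
  -- cardinal bookkeeping
  refine ⟨I, J, K, 0, x, 0, ?_⟩
  have himg0 : ∀ s : Set R, (fun z => (0:R) + z) '' s = s := by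
    intro s; simp
  rw [show ((0:R) + ·) '' (I : Set R) = (I : Set R) from himg0 _,
      show ((0:R) + ·) '' (K : Set R) = (K : Set R) from himg0 _,
      show ((x : R) + ·) '' (J : Set R) = C2 from rfl]
  have hC2card : C2.ncard = (J : Set R).ncard :=
    Set.ncard_image_of_injective _ (add_right_injective x)
  -- A-side
  have a1 : ((I : Set R) ∪ (J : Set R)).ncard + ((I : Set R) ∩ (J : Set R)).ncard
      = (I : Set R).ncard + (J : Set R).ncard :=
    Set.ncard_union_add_ncard_inter _ _ (Set.toFinite _) (Set.toFinite _)
  have a2 : (((I : Set R) ∪ (J : Set R)) ∪ (K : Set R)).ncard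
      + (((I : Set R) ∪ (J : Set R)) ∩ (K : Set R)).ncard
      = ((I : Set R) ∪ (J : Set R)).ncard + (K : Set R).ncard :=
    Set.ncard_union_add_ncard_inter _ _ (Set.toFinite _) (Set.toFinite _)
  have a3 : ((I : Set R) ∪ (J : Set R)) ∩ (K : Set R) = {0} := by
    rw [Set.union_inter_distrib_right, S_IK, S_JK, Set.union_self]
  -- B-side
  have b1 : ((I : Set R) ∪ C2).ncard + ((I : Set R) ∩ C2).ncard
      = (I : Set R).ncard + C2.ncard :=
    Set.ncard_union_add_ncard_inter _ _ (Set.toFinite _) (Set.toFinite _)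
  have b2 : (((I : Set R) ∪ C2) ∪ (K : Set R)).ncard
      + (((I : Set R) ∪ C2) ∩ (K : Set R)).ncard
      = ((I : Set R) ∪ C2).ncard + (K : Set R).ncard :=
    Set.ncard_union_add_ncard_inter _ _ (Set.toFinite _) (Set.toFinite _)
  have b3 : ((I : Set R) ∪ C2) ∩ (K : Set R) = {(0:R), x + y} := by
    rw [Set.union_inter_distrib_right, S_IK, S_C2K]
    rfl
  rw [S_IJ] at a1
  rw [a3] at a2
  rw [S_IC2] at b1
  rw [b3] at b2
  rw [Set.ncard_singleton] at a1 a2 b1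
  rw [Set.ncard_pair (Ne.symm hxy0)] at b2
  rw [hC2card] at b1
  omega
end

section
/- A finite commutative local ring R has totally ordered ideals if and only if every finite collection of ideals of R satisfies (R1'): for all ideals I1,…,Ir and all a1,…,ar ∈ R, |∪_j (aj + Ij)| ≥ |∪_j Ij|. -/
open IsLocalRing Set

section Aux

variable {R : Type*} [CommRing R] [Finite R] [IsLocalRing R]

private lemma unit_of_notMem_max {a : R} (h : a ∉ maximalIdeal R) : IsUnit a := by
  by_contra hu; exact h ((mem_maximalIdeal a).mpr hu)

private lemma union3 {α : Type*} (f : Fin 3 → Set α) : (⋃ j, f j) = f 0 ∪ f 1 ∪ f 2 := by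
  ext x; simp [Fin.exists_fin_succ, or_assoc]

/-- If every pair of elements of the maximal ideal is dependent modulo `m^2`,
then the ideals of `R` are totally ordered. -/
private lemma chain_of_dep
    (h : ∀ u v : R, u ∈ maximalIdeal R → v ∈ maximalIdeal R →
      ∃ a b : R, a * u + b * v ∈ (maximalIdeal R) ^ 2 ∧
        (a ∉ maximalIdeal R ∨ b ∉ maximalIdeal R)) :
    ∀ I J : Ideal R, I ≤ J ∨ J ≤ I := by
  classical
  obtain ⟨n, hn⟩ : IsNilpotent (maximalIdeal R) := by
    rw [← jacobson_eq_maximalIdeal ⊥ bot_ne_top]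
    exact IsArtinianRing.isNilpotent_jacobson_bot
  -- the maximal ideal is principal
  obtain ⟨t, ht⟩ : ∃ t, maximalIdeal R = Ideal.span {t} := by
    by_cases h2 : ∀ x ∈ maximalIdeal R, x ∈ (maximalIdeal R) ^ 2
    · refine ⟨0, ?_⟩
      have hm2 : maximalIdeal R = maximalIdeal R ^ 2 :=
        le_antisymm h2 (Ideal.pow_le_self two_ne_zero)
      have hk : ∀ k, maximalIdeal R ≤ maximalIdeal R ^ k := by
        intro k
        induction k with
        | zero => simp
        | succ k ih =>
          calc maximalIdeal R = maximalIdeal R ^ 2 := hm2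
            _ = maximalIdeal R * maximalIdeal R := sq _
            _ ≤ maximalIdeal R ^ k * maximalIdeal R := Ideal.mul_mono_left ih
            _ = maximalIdeal R ^ (k + 1) := (pow_succ _ _).symm
      have hbot : maximalIdeal R = ⊥ := by
        have h' := hk n
        rw [hn] at h'
        rw [Submodule.zero_eq_bot] at h'
        exact le_bot_iff.mp h'
      rw [hbot]
      exact (Ideal.span_singleton_eq_bot.mpr rfl).symm
    · push_neg at h2
      obtain ⟨t, htm, ht2⟩ := h2
      have hstep : maximalIdeal R ≤ Ideal.span {t} ⊔ maximalIdeal R • maximalIdeal R := by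
        intro x hx
        have hsm : maximalIdeal R • maximalIdeal R = maximalIdeal R ^ 2 := by
          rw [Ideal.smul_eq_mul, sq]
        obtain ⟨a, b, hab, hor⟩ := h x t hx htm
        by_cases ham : a ∈ maximalIdeal R
        · exfalso
          have hbm : b ∉ maximalIdeal R := hor.resolve_left (not_not_intro ham)
          have hax : a * x ∈ maximalIdeal R ^ 2 := by
            rw [sq]; exact Ideal.mul_mem_mul ham hx
          have hbt : b * t ∈ maximalIdeal R ^ 2 := by
            have : b * t = (a * x + b * t) - a * x := by ring
            rw [this]; exact sub_mem hab hax
          obtain ⟨bu, hbu⟩ := unit_of_notMem_max hbm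
          have : t ∈ maximalIdeal R ^ 2 := by
            have ht' : t = (↑bu⁻¹ : R) * (b * t) := by
              have h1 : (↑bu⁻¹ : R) * b = 1 := by rw [← hbu]; exact bu.inv_mul
              linear_combination (-t) * h1
            rw [ht']
            exact Ideal.mul_mem_left _ _ hbt
          exact ht2 this
        · obtain ⟨au, hau⟩ := unit_of_notMem_max ham
          rw [hsm]
          apply Ideal.mem_span_singleton_sup.mpr
          refine ⟨-((↑au⁻¹ : R) * b), (↑au⁻¹ : R) * (a * x + b * t),
            Ideal.mul_mem_left _ _ hab, ?_⟩
          have h1 : (↑au⁻¹ : R) * a = 1 := by rw [← hau]; exact au.inv_mul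
          linear_combination x * h1
      have hfg : (maximalIdeal R).FG := IsNoetherian.noetherian _
      have hjac : maximalIdeal R ≤ (⊥ : Ideal R).jacobson :=
        (jacobson_eq_maximalIdeal ⊥ bot_ne_top).ge
      have hle : maximalIdeal R ≤ Ideal.span {t} :=
        Submodule.le_of_le_smul_of_le_jacobson_bot hfg hjac hstep
      exact ⟨t, le_antisymm hle (Ideal.span_le.mpr (Set.singleton_subset_iff.mpr htm))⟩
  -- every ideal is a power of the maximal ideal
  have hpow : ∀ I : Ideal R, ∃ i, I = maximalIdeal R ^ i := by
    intro I
    by_cases hI : ∀ i, I ≤ maximalIdeal R ^ i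
    · exact ⟨n, le_antisymm (hn ▸ hI n) (hn ▸ bot_le)⟩
    · push_neg at hI
      have hfind := Nat.find_spec hI
      set i := Nat.find hI with hi
      have hipos : i ≠ 0 := by
        intro h0
        apply hfind
        rw [h0]
        simp
      set j := i - 1 with hj
      have hij : i = j + 1 := (Nat.succ_pred_eq_of_ne_zero hipos).symm
      have hIj : I ≤ maximalIdeal R ^ j := by
        by_contra hc
        exact absurd hc (by simpa using Nat.find_min hI (show j < i by omega))
      obtain ⟨x, hxI, hxi⟩ := SetLike.not_le_iff_exists.mp hfind
      have hxj : x ∈ Ideal.span {t ^ j} := by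
        rw [← Ideal.span_singleton_pow, ← ht]
        exact hIj hxI
      obtain ⟨c, hc⟩ := Ideal.mem_span_singleton'.mp hxj
      have htj : t ^ j ∈ maximalIdeal R ^ j := by
        rw [ht, Ideal.span_singleton_pow]
        exact Ideal.mem_span_singleton'.mpr ⟨1, one_mul _⟩
      have hcm : c ∉ maximalIdeal R := by
        intro hcmem
        apply hxi
        rw [hij, ← hc]
        have hmem : c * t ^ j ∈ maximalIdeal R * maximalIdeal R ^ j :=
          Ideal.mul_mem_mul hcmem htj
        rwa [← pow_succ'] at hmem
      obtain ⟨cu, hcu⟩ := unit_of_notMem_max hcm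
      have htjI : t ^ j ∈ I := by
        have h1 : (↑cu⁻¹ : R) * c = 1 := by rw [← hcu]; exact cu.inv_mul
        have : t ^ j = (↑cu⁻¹ : R) * x := by
          rw [← hc]; linear_combination (-(t ^ j)) * h1
        rw [this]
        exact Ideal.mul_mem_left _ _ hxI
      refine ⟨j, le_antisymm hIj ?_⟩
      rw [ht, Ideal.span_singleton_pow]
      exact Ideal.span_le.mpr (Set.singleton_subset_iff.mpr htjI)
  intro I J
  obtain ⟨i, rfl⟩ := hpow I
  obtain ⟨j, rfl⟩ := hpow J
  rcases le_total i j with hij | hij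
  · exact Or.inr (Ideal.pow_le_pow_right hij)
  · exact Or.inl (Ideal.pow_le_pow_right hij)

/-- Counterexample to (R1') when the maximal ideal has two independent elements mod `m²`. -/
private lemma not_R1' (u v : R) (hu : u ∈ maximalIdeal R) (hv : v ∈ maximalIdeal R)
    (hind : ∀ a b : R, a * u + b * v ∈ (maximalIdeal R) ^ 2 →
      a ∈ maximalIdeal R ∧ b ∈ maximalIdeal R) :
    ¬ SatisfiesR1' R := by
  intro hR1
  set m := maximalIdeal R with hm
  set N : Ideal R := m ^ 2 with hNdef
  have hone : (1 : R) ∉ m := fun h => mem_nonunits_iff.mp ((mem_maximalIdeal 1).mp h) isUnit_one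
  have huv : u + v ∈ m := add_mem hu hv
  have huvN : u + v ∉ (N : Set R) := by
    intro hmem
    exact hone (hind 1 1 (by rw [one_mul, one_mul]; exact hmem)).1
  have mulN : ∀ c w : R, c ∈ m → w ∈ m → c * w ∈ N := fun c w hc hw => by
    rw [hNdef, sq]; exact Ideal.mul_mem_mul hc hw
  set I1 : Ideal R := Ideal.span {u} ⊔ N with hI1
  set I2 : Ideal R := Ideal.span {v} ⊔ N with hI2
  set I3 : Ideal R := Ideal.span {u + v} ⊔ N with hI3
  set A : Set R := (I1 : Set R) ∪ (I2 : Set R) with hA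
  set S : Set R := (I3 : Set R) with hS
  set T : Set R := (v + ·) '' (I3 : Set R) with hT
  -- the untranslated intersection
  have hSA : S ∩ A = (N : Set R) := by
    apply subset_antisymm
    · rintro x ⟨hx3, hx12⟩
      obtain ⟨c, z, hz, hczx⟩ := Ideal.mem_span_singleton_sup.mp hx3
      have hcm : c ∈ m := by
        rcases hx12 with hx1 | hx1
        · obtain ⟨d, w, hw, hdwx⟩ := Ideal.mem_span_singleton_sup.mp hx1
          have he : (c - d) * u + c * v = w - z := by linear_combination hczx - hdwx
          exact (hind _ _ (he ▸ sub_mem hw hz)).2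
        · obtain ⟨d, w, hw, hdwx⟩ := Ideal.mem_span_singleton_sup.mp hx1
          have he : c * u + (c - d) * v = w - z := by linear_combination hczx - hdwx
          exact (hind _ _ (he ▸ sub_mem hw hz)).1
      have hc1 : c * (u + v) ∈ N := mulN _ _ hcm huv
      have : x ∈ N := by rw [← hczx]; exact add_mem hc1 hz
      exact this
    · intro x hx
      exact ⟨(le_sup_right : N ≤ I3) hx, Or.inl ((le_sup_right : N ≤ I1) hx)⟩
  -- the translated intersection
  have hTA : T ∩ A = ((-u + ·) '' (N : Set R)) ∪ ((v + ·) '' (N : Set R)) := by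
    apply subset_antisymm
    · rintro x ⟨⟨y, hy3, rfl⟩, hx12⟩
      obtain ⟨c, z, hz, hcz⟩ := Ideal.mem_span_singleton_sup.mp hy3
      rcases hx12 with hx1 | hx1
      · obtain ⟨d, w, hw, hdw⟩ := Ideal.mem_span_singleton_sup.mp hx1
        have he : (c - d) * u + (1 + c) * v = w - z := by linear_combination hcz - hdw
        have h1c : (1 + c) ∈ m := (hind _ _ (he ▸ sub_mem hw hz)).2
        refine Or.inl ⟨(1 + c) * (u + v) + z, add_mem (mulN _ _ h1c huv) hz, ?_⟩
        linear_combination hcz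
      · obtain ⟨d, w, hw, hdw⟩ := Ideal.mem_span_singleton_sup.mp hx1
        have he : c * u + (1 + c - d) * v = w - z := by linear_combination hcz - hdw
        have hcm : c ∈ m := (hind _ _ (he ▸ sub_mem hw hz)).1
        refine Or.inr ⟨c * (u + v) + z, add_mem (mulN _ _ hcm huv) hz, ?_⟩
        rw [hcz]
    · rintro x (⟨z, hz, rfl⟩ | ⟨z, hz, rfl⟩)
      · constructor
        · refine ⟨(-1) * (u + v) + z, ?_, by ring⟩
          exact add_mem ((le_sup_left : Ideal.span {u + v} ≤ I3)
            (Ideal.mem_span_singleton'.mpr ⟨-1, rfl⟩)) ((le_sup_right : N ≤ I3) hz)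
        · exact Or.inl (add_mem ((le_sup_left : Ideal.span {u} ≤ I1)
            (neg_mem (Ideal.mem_span_singleton_self u))) ((le_sup_right : N ≤ I1) hz))
      · constructor
        · exact ⟨z, (le_sup_right : N ≤ I3) hz, rfl⟩
        · exact Or.inr (add_mem ((le_sup_left : Ideal.span {v} ≤ I2)
            (Ideal.mem_span_singleton_self v)) ((le_sup_right : N ≤ I2) hz))
  have hdisj : Disjoint ((-u + ·) '' (N : Set R)) ((v + ·) '' (N : Set R)) := by
    rw [Set.disjoint_left]
    rintro x ⟨z1, hz1, rfl⟩ ⟨z2, hz2, heq⟩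
    apply huvN
    have : u + v = z1 - z2 := by linear_combination heq
    rw [this]
    exact sub_mem hz1 hz2
  have hinj : ∀ a : R, Function.Injective (a + ·) := fun a x y h => by simpa using h
  -- cardinalities
  have nTS : T.ncard = S.ncard := Set.ncard_image_of_injective _ (hinj v)
  have nSA : (S ∩ A).ncard = (N : Set R).ncard := by rw [hSA]
  have nTA : (T ∩ A).ncard = 2 * (N : Set R).ncard := by
    rw [hTA, Set.ncard_union_eq hdisj (Set.toFinite _) (Set.toFinite _),
      Set.ncard_image_of_injective _ (hinj (-u)), Set.ncard_image_of_injective _ (hinj v)]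
    ring
  have nN1 : 1 ≤ (N : Set R).ncard := by
    rw [Nat.one_le_iff_ne_zero, ← Nat.pos_iff_ne_zero]
    exact (Set.ncard_pos (Set.toFinite _)).mpr ⟨0, zero_mem N⟩
  have hSsplit : (S ∩ A).ncard + (S \ A).ncard = S.ncard :=
    Set.ncard_inter_add_ncard_diff_eq_ncard S A (Set.toFinite _)
  have hTsplit : (T ∩ A).ncard + (T \ A).ncard = T.ncard :=
    Set.ncard_inter_add_ncard_diff_eq_ncard T A (Set.toFinite _)
  have hUS : (A ∪ S).ncard = A.ncard + (S \ A).ncard := by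
    rw [← Set.union_diff_self,
      Set.ncard_union_eq Set.disjoint_sdiff_right (Set.toFinite _) (Set.toFinite _)]
  have hUT : (A ∪ T).ncard = A.ncard + (T \ A).ncard := by
    rw [← Set.union_diff_self,
      Set.ncard_union_eq Set.disjoint_sdiff_right (Set.toFinite _) (Set.toFinite _)]
  -- apply the hypothesis to the family (I1, I2, I3) with translations (0, 0, v)
  have hle := hR1 3 ![I1, I2, I3] ![0, 0, v]
  have e1 : (⋃ j, ((![I1, I2, I3] j : Ideal R) : Set R)) = A ∪ S := by
    rw [union3 fun j => ((![I1, I2, I3] j : Ideal R) : Set R)]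
    simp [hA, hS]
  have e2 : (⋃ j, ((![(0 : R), 0, v] j) + ·) '' ((![I1, I2, I3] j : Ideal R) : Set R))
      = A ∪ T := by
    rw [union3 fun j => ((![(0 : R), 0, v] j) + ·) '' ((![I1, I2, I3] j : Ideal R) : Set R)]
    have h0 : ∀ s : Set R, ((0 : R) + ·) '' s = s := by
      intro s; simp
    simp only [Matrix.cons_val_zero, Matrix.cons_val_one, Matrix.head_cons,
      Matrix.cons_val_two, Matrix.tail_cons, h0]
    rfl
  rw [e1, e2, hUS, hUT] at hle
  omega

end Aux

/-- A finite commutative local ring `R` has totally ordered ideals if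
and only if every finite collection of ideals of `R` satisfies (R1'). -/
theorem local_ring_R1'_iff_chain (R : Type*) [CommRing R] [Finite R] [IsLocalRing R] :
    (∀ I J : Ideal R, I ≤ J ∨ J ≤ I) ↔ SatisfiesR1' R := by
  constructor
  · intro hchain r I a
    rcases eq_or_ne r 0 with rfl | hr
    · simp
    · have : Nonempty (Fin r) := Fin.pos_iff_nonempty.mp (Nat.pos_of_ne_zero hr)
      have hdir : Directed (· ≤ ·) I := fun i j =>
        (hchain (I i) (I j)).elim (fun h => ⟨j, h, le_refl _⟩) fun h => ⟨i, le_refl _, h⟩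
      obtain ⟨k, hk⟩ := hdir.finset_le Finset.univ
      have hU : (⋃ j, ((I j : Set R))) = (I k : Set R) :=
        subset_antisymm (Set.iUnion_subset fun j => hk j (Finset.mem_univ j))
          (Set.subset_iUnion (fun j => ((I j : Set R))) k)
      rw [hU, ← Set.ncard_image_of_injective (I k : Set R)
        (show Function.Injective (a k + ·) from fun x y h => by simpa using h)]
      exact Set.ncard_le_ncard
        (Set.subset_iUnion (fun j => (a j + ·) '' (I j : Set R)) k) (Set.toFinite _)
  · intro hR1
    by_contra hnc
    have hex : ∃ u v : R, u ∈ IsLocalRing.maximalIdeal R ∧ v ∈ IsLocalRing.maximalIdeal R ∧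
        ∀ a b : R, a * u + b * v ∈ (IsLocalRing.maximalIdeal R) ^ 2 →
          a ∈ IsLocalRing.maximalIdeal R ∧ b ∈ IsLocalRing.maximalIdeal R := by
      by_contra hno
      push_neg at hno
      apply hnc
      apply chain_of_dep
      intro u v hu hv
      obtain ⟨a, b, hP, hab⟩ := hno u v hu hv
      refine ⟨a, b, hP, ?_⟩
      by_cases ham : a ∈ IsLocalRing.maximalIdeal R
      · exact Or.inr (hab ham)
      · exact Or.inl ham
    obtain ⟨u, v, hu, hv, hind⟩ := hex
    exact not_R1' u v hu hv hind hR1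
end

section
/- Let R be a one-dimensional Noetherian domain such that for every nonzero ideal I, the quotient R/I is a finite direct product of local rings with linearly ordered ideals. Then for every nonzero prime ideal p of R, the localization R_p has totally ordered ideals (i.e., is a valuation ring), and hence R is integrally closed, so R is a Dedekind domain. -/
universe u

lemma pi_mem_ideal_iff' {k : ℕ} {Rs : Fin k → Type u} [∀ i, CommRing (Rs i)]
    (I : Ideal (∀ i, Rs i)) (x : ∀ i, Rs i) :
    x ∈ I ↔ ∀ i, x i ∈ I.map (Pi.evalRingHom Rs i) := by
  constructor
  · intro hx i
    exact Ideal.mem_map_of_mem _ hx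
  · intro h
    have hsurj : ∀ i, Function.Surjective (Pi.evalRingHom Rs i) := by
      intro i y
      exact ⟨Pi.single i y, Pi.single_eq_same i y⟩
    rw [← Finset.univ_sum_single x]
    refine Ideal.sum_mem _ fun i _ => ?_
    obtain ⟨y, hy, hyx⟩ := (Ideal.mem_map_iff_of_surjective _ (hsurj i)).mp (h i)
    have hxy : Pi.single i (x i) = y * Pi.single i 1 := by
      ext j
      rcases eq_or_ne j i with rfl | hj
      · simp [← hyx]
      · simp [Pi.single_eq_of_ne hj]
    rw [hxy]
    exact I.mul_mem_right _ hy

lemma chain_ideals_localization (R : Type u) [CommRing R]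
    [IsDomain R] [IsNoetherianRing R] [Ring.DimensionLEOne R]
    (hquot : ∀ I : Ideal R, I ≠ ⊥ →
      ∃ (k : ℕ) (Rs : Fin k → Type u) (_ : ∀ i, CommRing (Rs i)),
        Nonempty ((R ⧸ I) ≃+* ∀ i, Rs i) ∧
          ∀ i, IsLocalRing (Rs i) ∧ ∀ A B : Ideal (Rs i), A ≤ B ∨ B ≤ A)
    (p : Ideal R) [hp : p.IsPrime] (hp0 : p ≠ ⊥)
    (A B : Ideal (Localization.AtPrime p)) : A ≤ B ∨ B ≤ A := by
  haveI : IsNoetherianRing (Localization.AtPrime p) :=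
    IsLocalization.isNoetherianRing p.primeCompl _ ‹IsNoetherianRing R›
  -- every nonzero proper ideal of the localization pulls back to an ideal containing a power
  -- of `p`
  have pow_le : ∀ C : Ideal (Localization.AtPrime p), C ≠ ⊥ → C ≠ ⊤ →
      ∃ n, p ^ n ≤ C.comap (algebraMap R (Localization.AtPrime p)) := by
    intro C hC0 hCtop
    have hrad : C.radical = IsLocalRing.maximalIdeal (Localization.AtPrime p) := by
      rw [Ideal.radical_eq_sInf]
      apply le_antisymm
      · exact sInf_le ⟨IsLocalRing.le_maximalIdeal hCtop,
          (IsLocalRing.maximalIdeal.isMaximal _).isPrime⟩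
      · refine le_sInf ?_
        rintro Q ⟨hCQ, hQ⟩
        have hQ0 : Q ≠ ⊥ := by
          intro h
          exact hC0 (le_bot_iff.mp (h ▸ hCQ))
        have hcomap := (IsLocalization.isPrime_iff_isPrime_disjoint p.primeCompl
          (Localization.AtPrime p) Q).mp hQ
        have hle : Q.comap (algebraMap R (Localization.AtPrime p)) ≤ p := by
          intro x hx
          by_contra hxp
          exact Set.disjoint_left.mp hcomap.2 (show x ∈ p.primeCompl from hxp) hx
        have hne : Q.comap (algebraMap R (Localization.AtPrime p)) ≠ ⊥ := by
          intro h
          apply hQ0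
          rw [← IsLocalization.map_comap p.primeCompl (Localization.AtPrime p) Q,
            show Ideal.under R Q = ⊥ from h, Ideal.map_bot]
        have heq : Q.comap (algebraMap R (Localization.AtPrime p)) = p :=
          (hcomap.1.isMaximal hne).eq_of_le hp.ne_top hle
        refine le_of_eq ?_
        calc IsLocalRing.maximalIdeal (Localization.AtPrime p)
            = p.map (algebraMap R (Localization.AtPrime p)) :=
              (Localization.AtPrime.map_eq_maximalIdeal).symm
          _ = (Q.comap (algebraMap R (Localization.AtPrime p))).map
              (algebraMap R (Localization.AtPrime p)) := by rw [heq]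
          _ = Q := IsLocalization.map_comap p.primeCompl _ Q
    obtain ⟨n, hn⟩ := Ideal.exists_radical_pow_le_of_fg C (IsNoetherian.noetherian _)
    rw [hrad] at hn
    refine ⟨n, ?_⟩
    intro x hx
    rw [Ideal.mem_comap]
    have h1 : algebraMap R (Localization.AtPrime p) x ∈
        Ideal.map (algebraMap R (Localization.AtPrime p)) (p ^ n) := Ideal.mem_map_of_mem _ hx
    rw [Ideal.map_pow, Localization.AtPrime.map_eq_maximalIdeal] at h1
    exact hn h1
  by_cases hA0 : A = ⊥
  · left; rw [hA0]; exact bot_le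
  by_cases hB0 : B = ⊥
  · right; rw [hB0]; exact bot_le
  by_cases hAt : A = ⊤
  · right; rw [hAt]; exact le_top
  by_cases hBt : B = ⊤
  · left; rw [hBt]; exact le_top
  obtain ⟨nA, hnA⟩ := pow_le A hA0 hAt
  obtain ⟨nB, hnB⟩ := pow_le B hB0 hBt
  set K : ℕ := max nA nB + 1 with hK
  set a : Ideal R := A.comap (algebraMap R (Localization.AtPrime p)) with ha
  set b : Ideal R := B.comap (algebraMap R (Localization.AtPrime p)) with hb
  have hpa : p ^ K ≤ a :=
    le_trans (Ideal.pow_le_pow_right (Nat.le_succ_of_le (le_max_left _ _))) hnA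
  have hpb : p ^ K ≤ b :=
    le_trans (Ideal.pow_le_pow_right (Nat.le_succ_of_le (le_max_right _ _))) hnB
  have hpK0 : p ^ K ≠ ⊥ := by
    obtain ⟨x, hxp, hx0⟩ := Submodule.exists_mem_ne_zero_of_ne_bot hp0
    intro h
    have hmem : x ^ K ∈ p ^ K := Ideal.pow_mem_pow hxp K
    rw [h, Ideal.mem_bot] at hmem
    exact pow_ne_zero K hx0 hmem
  obtain ⟨k, Rs, instRs, ⟨e⟩, hRs⟩ := hquot (p ^ K) hpK0
  letI := instRs
  set g : R →+* ∀ i, Rs i := (e : (R ⧸ p ^ K) ≃+* ∀ i, Rs i).toRingHom.comp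
    (Ideal.Quotient.mk (p ^ K)) with hgdef
  have hg : Function.Surjective g := e.surjective.comp Ideal.Quotient.mk_surjective
  have hker : RingHom.ker g = p ^ K := by
    ext x
    simp only [hgdef, RingHom.mem_ker, RingHom.comp_apply, RingEquiv.toRingHom_eq_coe,
      RingHom.coe_coe, EmbeddingLike.map_eq_zero_iff, Ideal.Quotient.eq_zero_iff_mem]
  have hcm : ∀ c : Ideal R, p ^ K ≤ c → (c.map g).comap g = c := by
    intro c hc
    rw [Ideal.comap_map_of_surjective g hg, ← RingHom.ker_eq_comap_bot, hker,
      sup_eq_left.mpr hc]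
  -- the image of `p` is prime
  haveI hp' : (p.map g).IsPrime :=
    Ideal.map_isPrime_of_surjective hg (by rw [hker]; exact Ideal.pow_le_self (by omega))
  -- there is an index `i0` whose idempotent is not in the image of `p`
  obtain ⟨i0, hi0⟩ : ∃ i0, Pi.single i0 (1 : Rs i0) ∉ p.map g := by
    by_contra h
    push_neg at h
    apply hp'.ne_top
    rw [Ideal.eq_top_iff_one]
    rw [show (1 : ∀ i, Rs i) = ∑ i, Pi.single i 1 from (Finset.univ_sum_single _).symm]
    exact Ideal.sum_mem _ fun i _ => h i
  -- saturation: the contraction of an ideal of the localization is `p`-saturated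
  have sat : ∀ (C : Ideal (Localization.AtPrime p)) (t x : R), t ∉ p →
      t * x ∈ C.comap (algebraMap R (Localization.AtPrime p)) →
      x ∈ C.comap (algebraMap R (Localization.AtPrime p)) := by
    intro C t x ht htx
    have hu : IsUnit (algebraMap R (Localization.AtPrime p) t) :=
      IsLocalization.map_units _ (⟨t, ht⟩ : p.primeCompl)
    rw [Ideal.mem_comap] at htx ⊢
    rw [map_mul] at htx
    exact (Ideal.unit_mul_mem_iff_mem _ hu).mp htx
  -- for indices other than `i0`, the image ideals are full
  have top_comp : ∀ C : Ideal (Localization.AtPrime p),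
      p ^ K ≤ C.comap (algebraMap R (Localization.AtPrime p)) →
      ∀ i, i ≠ i0 → Pi.single i (1 : Rs i) ∈
        (C.comap (algebraMap R (Localization.AtPrime p))).map g := by
    intro C hC i hi
    obtain ⟨t, ht⟩ := hg (Pi.single i0 1)
    obtain ⟨x, hx⟩ := hg (Pi.single i 1)
    have htp : t ∉ p := by
      intro h
      exact hi0 (ht ▸ Ideal.mem_map_of_mem g h)
    have h0 : g (t * x) = 0 := by
      rw [map_mul, ht, hx]
      ext j
      rcases eq_or_ne j i0 with rfl | hj
      · simp [Pi.single_eq_of_ne (Ne.symm hi)]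
      · simp [Pi.single_eq_of_ne hj]
    have htxm : t * x ∈ C.comap (algebraMap R (Localization.AtPrime p)) := by
      apply hC
      rw [← hker, RingHom.mem_ker]
      exact h0
    have hxm : x ∈ C.comap (algebraMap R (Localization.AtPrime p)) := sat C t x htp htxm
    exact hx ▸ Ideal.mem_map_of_mem g hxm
  by_cases hab : a ≤ b
  · left
    calc A = a.map (algebraMap R (Localization.AtPrime p)) :=
          (IsLocalization.map_comap p.primeCompl _ A).symm
      _ ≤ b.map (algebraMap R (Localization.AtPrime p)) := Ideal.map_mono hab
      _ = B := IsLocalization.map_comap p.primeCompl _ B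
  right
  obtain ⟨r, hra, hrb⟩ := SetLike.not_le_iff_exists.mp hab
  -- there is a component where `g r` fails to be in the image of `b`; it must be `i0`
  have hnot : ¬ ∀ i, (g r) i ∈ (b.map g).map (Pi.evalRingHom Rs i) := by
    intro h
    apply hrb
    have h1 : g r ∈ b.map g := (pi_mem_ideal_iff' _ _).mpr h
    have h2 : r ∈ (b.map g).comap g := Ideal.mem_comap.mpr h1
    rwa [hcm b hpb] at h2
  push_neg at hnot
  obtain ⟨j, hj⟩ := hnot
  have hji : j = i0 := by
    by_contra hji
    apply hj
    have h1 : Pi.single j (1 : Rs j) ∈ b.map g := top_comp B hpb j hji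
    have h2 : g r * Pi.single j 1 ∈ b.map g := Ideal.mul_mem_left _ _ h1
    have h3 := Ideal.mem_map_of_mem (Pi.evalRingHom Rs j) h2
    simpa using h3
  subst hji
  -- on component `j`, the image of `b` is contained in the image of `a`
  have hchain := (hRs j).2
  have hnotle : ¬ (a.map g).map (Pi.evalRingHom Rs j) ≤ (b.map g).map (Pi.evalRingHom Rs j) := by
    intro hle
    exact hj (hle (Ideal.mem_map_of_mem _ (Ideal.mem_map_of_mem g hra)))
  have hba : (b.map g).map (Pi.evalRingHom Rs j) ≤ (a.map g).map (Pi.evalRingHom Rs j) :=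
    (hchain ((a.map g).map (Pi.evalRingHom Rs j)) ((b.map g).map (Pi.evalRingHom Rs j))).resolve_left hnotle
  -- conclude `b ≤ a`
  have hba' : b ≤ a := by
    intro s hs
    have hgs : g s ∈ a.map g := by
      rw [pi_mem_ideal_iff']
      intro i
      rcases eq_or_ne i j with rfl | hi
      · exact hba (Ideal.mem_map_of_mem _ (Ideal.mem_map_of_mem g hs))
      · have h1 : Pi.single i (1 : Rs i) ∈ a.map g := top_comp A hpa i hi
        have h2 : g s * Pi.single i 1 ∈ a.map g := Ideal.mul_mem_left _ _ h1
        have h3 := Ideal.mem_map_of_mem (Pi.evalRingHom Rs i) h2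
        simpa using h3
    have h2 : s ∈ (a.map g).comap g := Ideal.mem_comap.mpr hgs
    rwa [hcm a hpa] at h2
  calc B = b.map (algebraMap R (Localization.AtPrime p)) :=
        (IsLocalization.map_comap p.primeCompl _ B).symm
    _ ≤ a.map (algebraMap R (Localization.AtPrime p)) := Ideal.map_mono hba'
    _ = A := IsLocalization.map_comap p.primeCompl _ A

set_option maxHeartbeats 1000000 in
set_option synthInstance.maxHeartbeats 400000 in
/-- Let `R` be a one-dimensional Noetherian domain such that for every
nonzero ideal `I` the quotient `R ⧸ I` is a finite direct product of local rings with
linearly ordered ideals. Then for every nonzero prime `p` the localization `R_p` has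
totally ordered ideals (i.e. is a valuation ring), hence `R` is integrally closed, so
`R` is a Dedekind domain. -/
theorem dedekind_of_quotients_products_of_chain_local (R : Type u) [CommRing R]
    [IsDomain R] [IsNoetherianRing R] (hdim : ringKrullDim R = 1)
    (hquot : ∀ I : Ideal R, I ≠ ⊥ →
      ∃ (k : ℕ) (Rs : Fin k → Type u) (_ : ∀ i, CommRing (Rs i)),
        Nonempty ((R ⧸ I) ≃+* ∀ i, Rs i) ∧
          ∀ i, IsLocalRing (Rs i) ∧ ∀ A B : Ideal (Rs i), A ≤ B ∨ B ≤ A) :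
    (∀ (p : Ideal R) [p.IsPrime], p ≠ ⊥ →
        ∀ A B : Ideal (Localization.AtPrime p), A ≤ B ∨ B ≤ A) ∧
      IsIntegrallyClosed R ∧ IsDedekindDomain R := by
  haveI hdim1 : Ring.DimensionLEOne R := by
    constructor
    intro q hq hqp
    rcases q.exists_le_maximal hqp.ne_top with ⟨m, hm, hqm⟩
    rcases eq_or_lt_of_le hqm with rfl | hlt
    · exact hm
    exfalso
    have hbot : (⊥ : Ideal R) < q := bot_lt_iff_ne_bot.mpr hq
    let c : LTSeries (PrimeSpectrum R) := {
      length := 2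
      toFun := ![⟨⊥, Ideal.bot_prime⟩, ⟨q, hqp⟩, ⟨m, hm.isPrime⟩]
      step := by
        intro i
        fin_cases i
        · exact hbot
        · exact hlt }
    have h2 := Order.LTSeries.length_le_krullDim c
    rw [show Order.krullDim (PrimeSpectrum R) = ringKrullDim R from rfl, hdim] at h2
    norm_num [c] at h2
  have hic : IsIntegrallyClosed R := by
    apply IsIntegrallyClosed.of_localization_maximal
    intro p hp0 hpm
    haveI : IsDomain (Localization.AtPrime p) :=
      IsLocalization.isDomain_localization p.primeCompl_le_nonZeroDivisors
    haveI : ValuationRing (Localization.AtPrime p) :=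
      ValuationRing.iff_ideal_total.mpr ⟨chain_ideals_localization R hquot p hp0⟩
    infer_instance
  haveI : IsIntegrallyClosed R := hic
  refine ⟨fun p hp hp0 => chain_ideals_localization R hquot p hp0, hic, ?_⟩
  exact { }
end

section
/- Let R be a one-dimensional Noetherian domain. Then R is a Dedekind domain if and only if for every nonzero ideal I, the ring R/I is a finite direct product of local rings whose ideals are linearly ordered by inclusion. -/
universe u

open Ideal UniqueFactorizationMonoid

section Aux

lemma isLocalRing_of_chain {S : Type*} [CommRing S] [Nontrivial S]
    (h : ∀ A B : Ideal S, A ≤ B ∨ B ≤ A) : IsLocalRing S := by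
  obtain ⟨m, hm⟩ := Ideal.exists_maximal S
  exact IsLocalRing.of_unique_max_ideal ⟨m, hm, fun J hJ =>
    (h J m).elim (fun hle => hJ.eq_of_le hm.ne_top hle)
      (fun hle => (hm.eq_of_le hJ.ne_top hle).symm)⟩

lemma chain_quotient_pow {R : Type u} [CommRing R] [IsDomain R] [IsDedekindDomain R]
    {p : Ideal R} (hp : Prime p) (n : ℕ) (A B : Ideal (R ⧸ p ^ n)) : A ≤ B ∨ B ≤ A := by
  have hsurj : Function.Surjective (Ideal.Quotient.mk (p ^ n)) :=
    Ideal.Quotient.mk_surjective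
  have hA : p ^ n ≤ A.comap (Ideal.Quotient.mk (p ^ n)) := fun x hx => by
    simp only [Ideal.mem_comap, Ideal.Quotient.eq_zero_iff_mem.mpr hx]
    exact A.zero_mem
  have hB : p ^ n ≤ B.comap (Ideal.Quotient.mk (p ^ n)) := fun x hx => by
    simp only [Ideal.mem_comap, Ideal.Quotient.eq_zero_iff_mem.mpr hx]
    exact B.zero_mem
  obtain ⟨i, hi, hJ⟩ := (dvd_prime_pow hp n).mp (Ideal.dvd_iff_le.mpr hA)
  obtain ⟨j, hj, hK⟩ := (dvd_prime_pow hp n).mp (Ideal.dvd_iff_le.mpr hB)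
  rw [associated_iff_eq] at hJ hK
  rcases le_total i j with hij | hij
  · right
    rw [← Ideal.comap_le_comap_iff_of_surjective _ hsurj, hJ, hK]
    exact Ideal.pow_le_pow_right hij
  · left
    rw [← Ideal.comap_le_comap_iff_of_surjective _ hsurj, hJ, hK]
    exact Ideal.pow_le_pow_right hij

lemma key_dvd {R : Type u} [CommRing R] [IsDomain R] {p : Ideal R} [hp : p.IsMaximal]
    (H : ∀ I : Ideal R, I ≠ ⊥ →
        ∃ (k : ℕ) (Rs : Fin k → Type u) (_ : ∀ i, CommRing (Rs i)),
          Nonempty ((R ⧸ I) ≃+* ∀ i, Rs i) ∧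
            ∀ i, IsLocalRing (Rs i) ∧ ∀ A B : Ideal (Rs i), A ≤ B ∨ B ≤ A)
    (x y : R) :
    algebraMap R (Localization.AtPrime p) x ∣ algebraMap R (Localization.AtPrime p) y ∨
      algebraMap R (Localization.AtPrime p) y ∣ algebraMap R (Localization.AtPrime p) x := by
  classical
  set S := Localization.AtPrime p with hS
  set ι := algebraMap R S with hι
  by_cases h0 : x * y = 0
  · rcases mul_eq_zero.mp h0 with rfl | rfl
    · right; simp only [map_zero]; exact dvd_zero _
    · left; simp only [map_zero]; exact dvd_zero _
  by_cases hmem : x * y ∈ p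
  · -- main case
    have hI : Ideal.span {x * y} ≠ ⊥ := by
      simpa only [Ne, Ideal.span_singleton_eq_bot] using h0
    obtain ⟨k, Rs, inst, ⟨e⟩, hloc⟩ := H (Ideal.span {x * y}) hI
    set f : R →+* ∀ i, Rs i :=
      (e : (R ⧸ Ideal.span {x * y}) →+* ∀ i, Rs i).comp
        (Ideal.Quotient.mk (Ideal.span {x * y})) with hf
    have hfsurj : Function.Surjective f :=
      e.surjective.comp Ideal.Quotient.mk_surjective
    have hker : RingHom.ker f = Ideal.span {x * y} := by
      ext z
      simp only [RingHom.mem_ker, hf, RingHom.comp_apply, RingEquiv.coe_toRingHom]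
      rw [show (0 : ∀ i, Rs i) = e 0 by rw [map_zero], e.injective.eq_iff]
      exact Ideal.Quotient.eq_zero_iff_mem
    have hle : RingHom.ker f ≤ p := by
      rw [hker, Ideal.span_le, Set.singleton_subset_iff]
      exact hmem
    set P := Ideal.map f p with hP
    have hPprime : P.IsPrime := Ideal.map_isPrime_of_surjective hfsurj hle
    have hcomap : Ideal.comap f P = p := by
      rw [hP, Ideal.comap_map_of_surjective f hfsurj, ← RingHom.ker_eq_comap_bot,
        sup_eq_left.mpr hle]
    have h1 : (1 : ∀ i, Rs i) ∉ P := fun h =>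
      hPprime.ne_top ((Ideal.eq_top_iff_one P).mpr h)
    have hex : ∃ j, Pi.single j (1 : Rs j) ∉ P := by
      by_contra hall
      push_neg at hall
      apply h1
      have hsum : (1 : ∀ i, Rs i) = ∑ j, Pi.single j (1 : Rs j) := by
        have := Finset.univ_sum_single (1 : ∀ i, Rs i)
        simpa using this.symm
      rw [hsum]
      exact Ideal.sum_mem _ fun j _ => hall j
    obtain ⟨j, hj⟩ := hex
    have inner : ∀ a b : R, a * b = x * y →
        f a j ∈ Ideal.span {f b j} → ι b ∣ ι a := by
      intro a b hab hmem'
      obtain ⟨t, ht⟩ := Ideal.mem_span_singleton'.mp hmem'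
      obtain ⟨T, hT⟩ := hfsurj (Pi.single j t)
      obtain ⟨w, hw⟩ := hfsurj (Pi.single j (1 : Rs j))
      have hwp : w ∉ p := fun hwmem => hj (hw ▸ Ideal.mem_map_of_mem f hwmem)
      have hzero : f ((a - T * b) * w) = 0 := by
        rw [_root_.map_mul, map_sub, _root_.map_mul, hT, hw]
        funext i
        by_cases hij : i = j
        · subst hij
          simp only [Pi.mul_apply, Pi.sub_apply, Pi.single_eq_same, Pi.zero_apply]
          rw [ht]
          ring
        · simp [Pi.single_eq_of_ne hij]
      have hmemk : (a - T * b) * w ∈ Ideal.span {x * y} := by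
        rw [← hker]
        exact hzero
      obtain ⟨c, hc⟩ := Ideal.mem_span_singleton'.mp hmemk
      have heq : a * w = b * (T * w + c * a) := by
        rw [← hab] at hc
        linear_combination -hc
      have hwunit : IsUnit (ι w) :=
        IsLocalization.map_units S (⟨w, hwp⟩ : p.primeCompl)
      have hdvd : ι b ∣ ι a * ι w :=
        ⟨ι (T * w + c * a), by rw [← _root_.map_mul, ← _root_.map_mul, heq]⟩
      exact hwunit.dvd_mul_right.mp hdvd
    rcases (hloc j).2 (Ideal.span {f x j}) (Ideal.span {f y j}) with hc | hc
    · right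
      exact inner x y rfl (hc (Ideal.mem_span_singleton_self _))
    · left
      exact inner y x (mul_comm y x) (hc (Ideal.mem_span_singleton_self _))
  · -- x * y ∉ p, hence x ∉ p, so ι x is a unit
    have hxp : x ∉ p := fun hx => hmem (Ideal.mul_mem_right y p hx)
    have hxunit : IsUnit (ι x) :=
      IsLocalization.map_units S (⟨x, hxp⟩ : p.primeCompl)
    left
    exact hxunit.dvd

lemma valuationRing_of_chain {R : Type u} [CommRing R] [IsDomain R] {p : Ideal R}
    [hp : p.IsMaximal]
    (H : ∀ I : Ideal R, I ≠ ⊥ →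
        ∃ (k : ℕ) (Rs : Fin k → Type u) (_ : ∀ i, CommRing (Rs i)),
          Nonempty ((R ⧸ I) ≃+* ∀ i, Rs i) ∧
            ∀ i, IsLocalRing (Rs i) ∧ ∀ A B : Ideal (Rs i), A ≤ B ∨ B ≤ A) :
    ValuationRing (Localization.AtPrime p) := by
  haveI : IsDomain (Localization.AtPrime p) :=
    IsLocalization.isDomain_of_local_atPrime hp.isPrime
  rw [ValuationRing.iff_dvd_total]
  set S := Localization.AtPrime p with hS
  set ι := algebraMap R S with hι
  constructor
  intro a b
  obtain ⟨⟨xa, sa⟩, ha⟩ := IsLocalization.surj p.primeCompl a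
  obtain ⟨⟨xb, sb⟩, hb⟩ := IsLocalization.surj p.primeCompl b
  have hsaunit : IsUnit (ι (sa : R)) := IsLocalization.map_units S sa
  have hsbunit : IsUnit (ι (sb : R)) := IsLocalization.map_units S sb
  rcases key_dvd (p := p) H xa xb with h | h
  · left
    have h1 : a ∣ ι xa := ⟨ι (sa : R), ha.symm⟩
    have h2 : a ∣ b * ι (sb : R) := by rw [hb]; exact h1.trans h
    exact hsbunit.dvd_mul_right.mp h2
  · right
    have h1 : b ∣ ι xb := ⟨ι (sb : R), hb.symm⟩
    have h2 : b ∣ a * ι (sa : R) := by rw [ha]; exact h1.trans h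
    exact hsaunit.dvd_mul_right.mp h2

end Aux

/-- **Lemma 3 of the paper.** A one-dimensional Noetherian domain `R` is
a Dedekind domain iff for every nonzero ideal `I`, the ring `R ⧸ I` is a finite direct
product of local rings whose ideals are linearly ordered by inclusion. -/
theorem dedekind_iff_quotients_products_of_chain_local (R : Type u) [CommRing R]
    [IsDomain R] [IsNoetherianRing R] (hdim : ringKrullDim R = 1) :
    IsDedekindDomain R ↔
      ∀ I : Ideal R, I ≠ ⊥ →
        ∃ (k : ℕ) (Rs : Fin k → Type u) (_ : ∀ i, CommRing (Rs i)),
          Nonempty ((R ⧸ I) ≃+* ∀ i, Rs i) ∧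
            ∀ i, IsLocalRing (Rs i) ∧ ∀ A B : Ideal (Rs i), A ≤ B ∨ B ≤ A := by
  constructor
  · intro hDD I hI
    classical
    set Fac := (factors I).toFinset with hFac
    let e0 := IsDedekindDomain.quotientEquivPiFactors hI
    refine ⟨Fac.card,
      fun i => R ⧸ ((Fac.equivFin.symm i : Ideal R) ^
        (factors I).count ((Fac.equivFin.symm i : Ideal R))),
      fun _ => inferInstance,
      ⟨e0.trans (RingEquiv.piCongrLeft'
        (fun P : Fac => R ⧸ (P : Ideal R) ^ (factors I).count (P : Ideal R))
        Fac.equivFin)⟩, ?_⟩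
    intro i
    set P := Fac.equivFin.symm i with hPdef
    have hPmem : (P : Ideal R) ∈ factors I := Multiset.mem_toFinset.mp P.2
    have hPprime : Prime (P : Ideal R) := prime_of_factor _ hPmem
    have hn : (factors I).count (P : Ideal R) ≠ 0 :=
      (Multiset.count_pos.mpr hPmem).ne'
    have hne : (P : Ideal R) ^ (factors I).count (P : Ideal R) ≠ ⊤ := fun h =>
      (Ideal.isPrime_of_prime hPprime).ne_top
        (top_le_iff.mp (h ▸ Ideal.pow_le_self hn))
    haveI := Ideal.Quotient.nontrivial_iff.mpr hne
    refine ⟨isLocalRing_of_chain (chain_quotient_pow hPprime _), chain_quotient_pow hPprime _⟩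
  · intro H
    have hd1 : Ring.DimensionLEOne R := by
      refine ⟨fun {q} hq hqp => ?_⟩
      obtain ⟨m, hm, hqm⟩ := q.exists_le_maximal hqp.ne_top
      by_cases heq : q = m
      · exact heq ▸ hm
      · exfalso
        have hlt1 : (⊥ : Ideal R) < q := Ne.bot_lt hq
        have hlt2 : q < m := lt_of_le_of_ne hqm heq
        let c : LTSeries (PrimeSpectrum R) :=
          ((RelSeries.singleton _ (⟨⊥, Ideal.bot_prime⟩ : PrimeSpectrum R)).snoc
            ⟨q, hqp⟩ (by
              rw [RelSeries.last_singleton]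
              exact (PrimeSpectrum.asIdeal_lt_asIdeal _ _).mp hlt1)).snoc
            ⟨m, hm.isPrime⟩ (by
              rw [RelSeries.last_snoc]
              exact (PrimeSpectrum.asIdeal_lt_asIdeal _ _).mp hlt2)
        have hlen : c.length = 2 := rfl
        have hle := Order.LTSeries.length_le_krullDim c
        rw [hlen] at hle
        have : ((2 : ℕ) : WithBot (WithTop ℕ)) ≤ ringKrullDim R := hle
        rw [hdim] at this
        norm_num at this
        exact absurd this (by norm_cast)
    haveI := hd1
    have hic : IsIntegrallyClosed R := by
      apply IsIntegrallyClosed.of_localization_maximal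
      intro p hp0 hpm
      haveI := hpm
      haveI : IsDomain (Localization.AtPrime p) :=
        IsLocalization.isDomain_of_local_atPrime hpm.isPrime
      haveI : IsNoetherianRing (Localization.AtPrime p) :=
        IsLocalization.isNoetherianRing p.primeCompl _ inferInstance
      haveI : ValuationRing (Localization.AtPrime p) := valuationRing_of_chain H
      haveI : IsBezout (Localization.AtPrime p) := inferInstance
      haveI : IsPrincipalIdealRing (Localization.AtPrime p) :=
        ⟨fun I => IsBezout.isPrincipal_of_FG I (IsNoetherian.noetherian I)⟩
      infer_instance
    haveI := hic
    haveI : IsDedekindRing R :=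
      (isDedekindRing_iff R (FractionRing R)).mpr
        ⟨inferInstance, hd1, fun hx => IsIntegrallyClosed.isIntegral_iff.mp hx⟩
    exact { (inferInstance : IsDomain R), (inferInstance : IsDedekindRing R) with }
end
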